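/- arXiv:1602.05423 — 3 statements merged into one kernel-verified Lean document; each statement's English description precedes it below -/
import Mathlib

section
/- Let η be a symmetric nondegenerate N×N complex matrix and K = η∂_x. Let ḡ_{α,d} ∈ Λ̂_N^{[0]}, d ≥ 0, be pairwise commuting local functionals with ḡ_{1,0} generating spatial translations, and suppose, with the convention ḡ_{α,−1} := ∫ η_{αμ}u^μ dx, that ∂ḡ_{α,d+1}/∂u^1 = ḡ_{α,d} for all d ≥ −1. Set h_{α,p} := δḡ_{α,p+1}/δu^1 for p ≥ −1 (these form a tau-structure), and let Ω_{α,p;β,q} be its two-point functions, with the convention Ω_{α,p;β,q} := 0 if p < 0 or q < 0. Then: (i) ∂h_{α,d}/∂u^1 = h_{α,d−1} for all d ≥ 0; (ii) for all p,q ≥ 0 the expression ∂Ω_{α,p;β,q}/∂u^1 − Ω_{α,p−1;β,q} − Ω_{α,p;β,q−1} is a constant (an element of ℂ[[ε]]), equal to (∂Ω_{α,p;β,q}/∂u^1)|_{u^*_*=0}. -/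
/-!
Common formal framework for the theory of differential polynomials, local
functionals and tau-structures, following Buryak–Dubrovin–Guéré–Rossi.

Variables of the algebra of differential polynomials: `Sum.inl (α, i)` stands
for `u^α_i` (with `u^α = u^α_0`) and `Sum.inr ()` stands for `ε`.  The paper's
index `1` (the unit direction) corresponds to `(0 : Fin N)` here.
-/

/-- The variables of the algebra of differential polynomials. -/
abbrev DVar (N : ℕ) : Type := (Fin N × ℕ) ⊕ Unit

/-- The ring `Â_N` of (extended) differential polynomials, realized inside the
ring of formal power series in the variables `u^α_i` and `ε`. -/
abbrev DP (N : ℕ) : Type := MvPowerSeries (DVar N) ℂ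

namespace DP

variable {N : ℕ}

/-- Coefficient of a monomial. -/
noncomputable def co (f : DP N) (m : DVar N →₀ ℕ) : ℂ :=
  MvPowerSeries.coeff m f

/-- Build a power series from its coefficients. -/
def ofCo (F : (DVar N →₀ ℕ) → ℂ) : DP N := F

/-- The variable `u^α_i`. -/
noncomputable def uv (α : Fin N) (i : ℕ) : DP N :=
  MvPowerSeries.X (Sum.inl (α, i))

/-- The variable `ε`. -/
noncomputable def eps : DP N := MvPowerSeries.X (Sum.inr ())

/-- The partial derivative `∂/∂v` with respect to one of the variables. -/
noncomputable def pd (v : DVar N) (f : DP N) : DP N :=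
  ofCo fun m => ((m v : ℂ) + 1) * co f (m + Finsupp.single v 1)

/-- The spatial derivative `∂_x = Σ_{α,i} u^α_{i+1} ∂/∂u^α_i`. -/
noncomputable def dx (f : DP N) : DP N :=
  ofCo fun m =>
    ∑ v ∈ m.support,
      (match v with
        | Sum.inl (α, i + 1) =>
            co (pd (Sum.inl (α, i)) f) (m - Finsupp.single (Sum.inl (α, i + 1)) 1)
        | _ => (0 : ℂ))

/-- The variational derivative `δ/δu^μ = Σ_{i≥0} (−∂_x)^i ∘ ∂/∂u^μ_i`. -/
noncomputable def vd (μ : Fin N) (f : DP N) : DP N :=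
  ofCo fun m => ∑ᶠ i : ℕ, ((-1 : ℂ) ^ i) * co (dx^[i] (pd (Sum.inl (μ, i)) f)) m

/-- The weighted degree of a monomial: `deg u^α_i = i`, `deg ε = −1`. -/
noncomputable def wdeg (m : DVar N →₀ ℕ) : ℤ :=
  ∑ v ∈ m.support,
    (match v with
      | Sum.inl (_, i) => (i : ℤ)
      | Sum.inr _ => (-1 : ℤ)) * (m v : ℤ)

/-- Degree-`k` homogeneity (membership in `Â_N^{[k]}`). -/
def IsHomog (k : ℤ) (f : DP N) : Prop :=
  ∀ m, co f m ≠ 0 → wdeg m = k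

/-- Being a constant, i.e. an element of `ℂ[[ε]]`. -/
def IsConst (f : DP N) : Prop :=
  ∀ m, co f m ≠ 0 → ∀ v ∈ m.support, v = Sum.inr ()

/-- Vanishing of the evaluation at `u^*_* = 0`. -/
def VanishAtU0 (f : DP N) : Prop :=
  ∀ k : ℕ, co f (Finsupp.single (Sum.inr ()) k) = 0

/-- Being a genuine differential polynomial: in each ε-degree at most `e`,
polynomiality (bounded degree, boundedly many variables) in the jet
variables `u^α_i`, `i ≥ 1`. -/
def IsDiffPoly (f : DP N) : Prop :=
  ∀ e : ℕ, ∃ D : ℕ, ∀ m, co f m ≠ 0 → m (Sum.inr ()) ≤ e →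
    ((∑ v ∈ m.support,
        (match v with
          | Sum.inl (_, _ + 1) => m v
          | _ => 0)) ≤ D) ∧
      ∀ (α : Fin N) (i : ℕ), D < i → m (Sum.inl (α, i)) = 0

/-- The submodule of constants `ℂ[[ε]] ⊆ Â_N`. -/
noncomputable def constSub (N : ℕ) : Submodule ℂ (DP N) where
  carrier := {f | IsConst f}
  add_mem' := by
    intro f g hf hg m hm
    have hco : co (f + g) m = co f m + co g m := map_add _ _ _
    by_cases h1 : co f m = 0
    · have h2 : co g m ≠ 0 := by
        intro h2; exact hm (by rw [hco, h1, h2, add_zero])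
      exact hg m h2
    · exact hf m h1
  zero_mem' := by
    intro m hm
    exact (hm (map_zero (MvPowerSeries.coeff (R := ℂ) m))).elim
  smul_mem' := by
    intro c f hf m hm
    have hne : co f m ≠ 0 := by
      intro h
      apply hm
      have hsm : co (c • f) m = c * co f m := by
        simp [co]
      rw [hsm, h, mul_zero]
    exact hf m hne

/-- The submodule `ℂ[[ε]] + ∂_x(Â_N)` by which one quotients to get local
functionals. -/
noncomputable def lfSub (N : ℕ) : Submodule ℂ (DP N) :=
  constSub N ⊔ Submodule.span ℂ (Set.range (dx : DP N → DP N))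

/-- The space `Λ̂_N` of local functionals. -/
abbrev LF (N : ℕ) := DP N ⧸ lfSub N

/-- The projection `f ↦ ∫ f dx`. -/
noncomputable def intg : DP N →ₗ[ℂ] LF N := (lfSub N).mkQ

/-- A choice of density for a local functional. -/
noncomputable def rep (h : LF N) : DP N :=
  (Submodule.Quotient.mk_surjective (lfSub N) h).choose

/-- The variational derivative `δ/δu^μ` of a local functional. -/
noncomputable def vdQ (μ : Fin N) (h : LF N) : DP N := vd μ (rep h)

/-- The partial derivative `∂/∂v` of a local functional. -/
noncomputable def pdQ (v : DVar N) (h : LF N) : LF N := intg (pd v (rep h))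

/-- The degree-`k` local functionals `Λ̂_N^{[k]}`. -/
noncomputable def LFHomog (N : ℕ) (k : ℤ) : Set (LF N) :=
  intg '' {f : DP N | IsHomog k f ∧ IsDiffPoly f}

/-- The operator `K = η ∂_x` applied to a tuple of differential polynomials. -/
noncomputable def etaAp (η : Matrix (Fin N) (Fin N) ℂ) (α : Fin N)
    (g : Fin N → DP N) : DP N :=
  ∑ ν : Fin N, η α ν • dx (g ν)

/-- The bracket `{f̄, ḡ}_{η∂_x}` of local functionals. -/
noncomputable def lfbEta (η : Matrix (Fin N) (Fin N) ℂ) (f g : LF N) : LF N :=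
  intg (∑ μ : Fin N, vdQ μ f * etaAp η μ fun ν => vdQ ν g)

/-- The bracket `{f, h̄}_{η∂_x}` of a differential polynomial with a local
functional. -/
noncomputable def pbEta (η : Matrix (Fin N) (Fin N) ℂ) (f : DP N) (h : LF N) : DP N :=
  ofCo fun m => ∑ γ : Fin N, ∑ᶠ n : ℕ,
    co (pd (Sum.inl (γ, n)) f * dx^[n] (etaAp η γ fun μ => vdQ μ h)) m

/-- A general operator `K^{γν} = Σ_j K^{γν}_j ∂_x^j` applied to a tuple of
differential polynomials. -/
noncomputable def Kap (K : Fin N → Fin N → ℕ → DP N) (γ : Fin N)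
    (g : Fin N → DP N) : DP N :=
  ∑ ν : Fin N, ofCo fun m => ∑ᶠ j : ℕ, co (K γ ν j * dx^[j] (g ν)) m

/-- The bracket `{f̄, ḡ}_K` of local functionals. -/
noncomputable def lfbK (K : Fin N → Fin N → ℕ → DP N) (f g : LF N) : LF N :=
  intg (∑ μ : Fin N, vdQ μ f * Kap K μ fun ν => vdQ ν g)

/-- The bracket `{f, h̄}_K` of a differential polynomial with a local
functional. -/
noncomputable def pbK (K : Fin N → Fin N → ℕ → DP N) (f : DP N) (h : LF N) : DP N :=
  ofCo fun m => ∑ γ : Fin N, ∑ᶠ n : ℕ,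
    co (pd (Sum.inl (γ, n)) f * dx^[n] (Kap K γ fun μ => vdQ μ h)) m

/-- Being a hamiltonian operator. -/
structure IsHamOp (K : Fin N → Fin N → ℕ → DP N) : Prop where
  finite : ∀ γ ν, ∃ J : ℕ, ∀ j, J ≤ j → K γ ν j = 0
  deg : ∀ (γ ν : Fin N) (j : ℕ), IsHomog (1 - (j : ℤ)) (K γ ν j)
  poly : ∀ γ ν j, IsDiffPoly (K γ ν j)
  antisym : ∀ f g : LF N, lfbK K f g = -lfbK K g f
  jacobi : ∀ f g h : LF N,
    lfbK K (lfbK K f g) h + lfbK K (lfbK K g h) f + lfbK K (lfbK K h f) g = 0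

/-- A hamiltonian hierarchy: a hamiltonian operator together with pairwise
commuting Hamiltonians `h̄_{β,q} ∈ Λ̂^{[0]}_N` such that `h̄_{1,0}` generates the
spatial translations. -/
structure IsHierarchy [NeZero N] (K : Fin N → Fin N → ℕ → DP N)
    (H : Fin N → ℕ → LF N) : Prop where
  ham : IsHamOp K
  mem : ∀ β q, H β q ∈ LFHomog N 0
  comm : ∀ β q γ p, lfbK K (H β q) (H γ p) = 0
  transl : ∀ α, Kap K α (fun μ => vdQ μ (H 0 0)) = uv α 1

/-- A tau-structure for a hamiltonian hierarchy.  Here `h β q` denotes the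
tau-symmetric density `h_{β,q-1}` (an index shift by one). -/
structure IsTauStructure [NeZero N] (K : Fin N → Fin N → ℕ → DP N)
    (H : Fin N → ℕ → LF N) (h : Fin N → ℕ → DP N) : Prop where
  mem : ∀ β q, IsHomog 0 (h β q) ∧ IsDiffPoly (h β q)
  casimir : ∀ β α, Kap K α (fun μ => vdQ μ (intg (h β 0))) = 0
  indep : LinearIndependent ℂ fun β : Fin N => intg (h β 0)
  nondeg : Matrix.det (Matrix.of fun α β : Fin N => co (K α β 1) 0) ≠ 0
  dens : ∀ β q, intg (h β (q + 1)) = H β q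
  tausym : ∀ α β p q, pbK K (h α p) (H β q) = pbK K (h β q) (H α p)

end DP



namespace DP
variable {N : ℕ}

lemma co_ofCo (F : (DVar N →₀ ℕ) → ℂ) (m : DVar N →₀ ℕ) : co (ofCo F) m = F m := rfl

lemma co_apply (f : DP N) (m : DVar N →₀ ℕ) : co f m = f m := rfl

lemma dp_ext {f g : DP N} (h : ∀ m, co f m = co g m) : f = g := funext h

lemma co_pd (v : DVar N) (f : DP N) (m : DVar N →₀ ℕ) :
    co (pd v f) m = ((m v : ℂ) + 1) * co f (m + Finsupp.single v 1) := rfl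

lemma co_add (f g : DP N) (m : DVar N →₀ ℕ) : co (f + g) m = co f m + co g m := rfl

lemma co_smul (c : ℂ) (f : DP N) (m : DVar N →₀ ℕ) : co (c • f) m = c * co f m := rfl

lemma co_sub (f g : DP N) (m : DVar N →₀ ℕ) : co (f - g) m = co f m - co g m := by
  simp [co]

lemma co_zero (m : DVar N →₀ ℕ) : co (0 : DP N) m = 0 := rfl

end DP
namespace DP
variable {N : ℕ}

lemma pd_add (v : DVar N) (f g : DP N) : pd v (f + g) = pd v f + pd v g := by
  apply dp_ext; intro m
  simp [co_pd, co_add]; ring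

lemma pd_smul (v : DVar N) (c : ℂ) (f : DP N) : pd v (c • f) = c • pd v f := by
  apply dp_ext; intro m
  simp [co_pd, co_smul]; ring

lemma pd_sub (v : DVar N) (f g : DP N) : pd v (f - g) = pd v f - pd v g := by
  apply dp_ext; intro m
  simp [co_pd, co_sub]; ring

lemma pd_zero (v : DVar N) : pd v (0 : DP N) = 0 := by
  apply dp_ext; intro m; simp [co_pd, co_zero]

/-- partial derivatives commute -/
lemma pd_comm (a b : DVar N) (f : DP N) : pd a (pd b f) = pd b (pd a f) := by
  apply dp_ext; intro m
  simp only [co_pd, Finsupp.add_apply, Finsupp.single_apply]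
  rw [show m + Finsupp.single a 1 + Finsupp.single b 1
      = m + Finsupp.single b 1 + Finsupp.single a 1 by
        rw [add_assoc, add_assoc, add_comm (Finsupp.single a 1)]]
  by_cases h : a = b
  · subst h; ring
  · have h1 : (if b = a then (1:ℕ) else 0) = 0 := by simp [Ne.symm h]
    have h2 : (if a = b then (1:ℕ) else 0) = 0 := by simp [h]
    rw [h1, h2]; push_cast; ring

end DP
namespace DP
variable {N : ℕ}

/-- The level of a variable. -/
def lvl : DVar N → ℕ
  | Sum.inl (_, i) => i
  | Sum.inr _ => 0

/-- jet weight of a monomial -/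
def wt (m : DVar N →₀ ℕ) : ℕ := m.sum fun v k => lvl v * k

lemma wt_add (m n : DVar N →₀ ℕ) : wt (m + n) = wt m + wt n := by
  unfold wt
  exact Finsupp.sum_add_index' (fun a => by simp) (fun a b c => by ring)

lemma wt_single (v : DVar N) (k : ℕ) : wt (Finsupp.single v k) = lvl v * k := by
  unfold wt
  exact Finsupp.sum_single_index (by simp)

/-- generic term of the dx sum -/
noncomputable def dxT (f : DP N) (m : DVar N →₀ ℕ) : DVar N → ℂ
  | Sum.inl (α, i + 1) =>
      co (pd (Sum.inl (α, i)) f) (m - Finsupp.single (Sum.inl (α, i + 1)) 1)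
  | _ => 0

lemma co_dx (f : DP N) (m : DVar N →₀ ℕ) :
    co (dx f) m = ∑ v ∈ m.support, dxT f m v := by
  show (∑ v ∈ m.support, _) = _
  refine Finset.sum_congr rfl fun v _ => ?_
  rcases v with ⟨α, (_ | i)⟩ | u <;> rfl

lemma sub_add_single {m : DVar N →₀ ℕ} {u : DVar N} (h : m u ≠ 0) :
    (m - Finsupp.single u 1) + Finsupp.single u 1 = m := by
  ext w
  simp only [Finsupp.add_apply, Finsupp.tsub_apply, Finsupp.single_apply]
  by_cases hw : u = w
  · subst hw; simp; omega
  · simp [hw]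

lemma support_add_single (m : DVar N →₀ ℕ) (v : DVar N) :
    (m + Finsupp.single v 1).support = insert v m.support := by
  ext u
  simp only [Finsupp.mem_support_iff, Finsupp.add_apply, Finsupp.single_apply,
    Finset.mem_insert]
  by_cases h : v = u
  · subst h; simp
  · simp [h, Ne.symm h]
  
lemma wt_sub_single {m : DVar N →₀ ℕ} {u : DVar N} (h : m u ≠ 0) :
    wt (m - Finsupp.single u 1) + lvl u = wt m := by
  conv_rhs => rw [← sub_add_single h]
  rw [wt_add, wt_single, mul_one]

/-- dx^[i] kills coefficients when i exceeds the weight -/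
lemma co_dxIter_eq_zero (i : ℕ) (g : DP N) (m : DVar N →₀ ℕ) (h : wt m < i) :
    co (dx^[i] g) m = 0 := by
  induction i generalizing g m with
  | zero => omega
  | succ n ih =>
    rw [Function.iterate_succ_apply', co_dx]
    refine Finset.sum_eq_zero fun v hv => ?_
    rcases v with ⟨α, (_ | j)⟩ | u
    · rfl
    · show co (pd (Sum.inl (α, j)) _) _ = 0
      rw [co_pd]
      rw [Finsupp.mem_support_iff] at hv
      have hlt : wt ((m - Finsupp.single (Sum.inl (α, j+1)) 1) + Finsupp.single (Sum.inl (α, j)) 1) < n := by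
        rw [wt_add, wt_single]
        have := wt_sub_single (m := m) (u := Sum.inl (α, j+1)) hv
        simp only [lvl] at this ⊢
        omega
      rw [ih _ _ hlt, mul_zero]
    · rfl

end DP
namespace DP
variable {N : ℕ}

lemma dxT_add (f g : DP N) (m : DVar N →₀ ℕ) (v : DVar N) :
    dxT (f + g) m v = dxT f m v + dxT g m v := by
  rcases v with ⟨α, (_ | i)⟩ | u
  · simp [dxT]
  · simp [dxT, pd_add, co_add]
  · simp [dxT]

lemma dxT_smul (c : ℂ) (f : DP N) (m : DVar N →₀ ℕ) (v : DVar N) :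
    dxT (c • f) m v = c * dxT f m v := by
  rcases v with ⟨α, (_ | i)⟩ | u
  · simp [dxT]
  · simp [dxT, pd_smul, co_smul]
  · simp [dxT]

lemma dx_add (f g : DP N) : dx (f + g) = dx f + dx g := by
  apply dp_ext; intro m
  rw [co_add, co_dx, co_dx, co_dx, ← Finset.sum_add_distrib]
  exact Finset.sum_congr rfl fun v _ => dxT_add f g m v

lemma dx_smul (c : ℂ) (f : DP N) : dx (c • f) = c • dx f := by
  apply dp_ext; intro m
  rw [co_smul, co_dx, co_dx, Finset.mul_sum]
  exact Finset.sum_congr rfl fun v _ => dxT_smul c f m v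

lemma dx_zero : dx (0 : DP N) = 0 := by
  apply dp_ext; intro m
  rw [co_dx, co_zero]
  refine Finset.sum_eq_zero fun v _ => ?_
  rcases v with ⟨α, (_ | i)⟩ | u
  · rfl
  · simp [dxT, pd_zero, co_zero]
  · rfl

lemma dx_sub (f g : DP N) : dx (f - g) = dx f - dx g := by
  apply dp_ext; intro m
  rw [co_sub, co_dx, co_dx, co_dx, ← Finset.sum_sub_distrib]
  refine Finset.sum_congr rfl fun v _ => ?_
  rcases v with ⟨α, (_ | i)⟩ | u
  · simp [dxT]
  · simp [dxT, pd_sub, co_sub]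
  · simp [dxT]

lemma dxIter_add (n : ℕ) (f g : DP N) : dx^[n] (f + g) = dx^[n] f + dx^[n] g := by
  induction n generalizing f g with
  | zero => rfl
  | succ k ih => rw [Function.iterate_succ_apply, Function.iterate_succ_apply,
      Function.iterate_succ_apply, dx_add, ih]

lemma dxIter_smul (n : ℕ) (c : ℂ) (f : DP N) : dx^[n] (c • f) = c • dx^[n] f := by
  induction n generalizing f with
  | zero => rfl
  | succ k ih => rw [Function.iterate_succ_apply, Function.iterate_succ_apply,
      dx_smul, ih]

lemma dxIter_zero (n : ℕ) : dx^[n] (0 : DP N) = 0 := by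
  induction n with
  | zero => rfl
  | succ k ih => rw [Function.iterate_succ_apply, dx_zero, ih]

/-- the finsum in vd as a finite sum -/
lemma co_vd (μ : Fin N) (f : DP N) (m : DVar N →₀ ℕ) :
    co (vd μ f) m
      = ∑ i ∈ Finset.range (wt m + 1),
          ((-1 : ℂ) ^ i) * co (dx^[i] (pd (Sum.inl (μ, i)) f)) m := by
  show (∑ᶠ i : ℕ, _) = _
  apply finsum_eq_finset_sum_of_support_subset
  intro i hi
  simp only [Function.mem_support] at hi
  simp only [Finset.coe_range, Set.mem_Iio]
  by_contra hc
  exact hi (by rw [co_dxIter_eq_zero i _ m (by omega), mul_zero])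

lemma vd_add (μ : Fin N) (f g : DP N) : vd μ (f + g) = vd μ f + vd μ g := by
  apply dp_ext; intro m
  rw [co_add, co_vd, co_vd, co_vd, ← Finset.sum_add_distrib]
  refine Finset.sum_congr rfl fun i _ => ?_
  rw [pd_add, dxIter_add, co_add]; ring

lemma vd_smul (μ : Fin N) (c : ℂ) (f : DP N) : vd μ (c • f) = c • vd μ f := by
  apply dp_ext; intro m
  rw [co_smul, co_vd, co_vd, Finset.mul_sum]
  refine Finset.sum_congr rfl fun i _ => ?_
  rw [pd_smul, dxIter_smul, co_smul]; ring

end DP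
namespace DP
variable {N : ℕ}

lemma dxT_inl_succ (f : DP N) (m : DVar N →₀ ℕ) (α : Fin N) (i : ℕ) :
    dxT f m (Sum.inl (α, i + 1))
      = co (pd (Sum.inl (α, i)) f) (m - Finsupp.single (Sum.inl (α, i + 1)) 1) := rfl

lemma dxT_inl_zero (f : DP N) (m : DVar N →₀ ℕ) (α : Fin N) :
    dxT f m (Sum.inl (α, 0)) = 0 := rfl

lemma dxT_inr (f : DP N) (m : DVar N →₀ ℕ) (u : Unit) :
    dxT f m (Sum.inr u) = 0 := rfl

lemma sub_single_apply_ne {m : DVar N →₀ ℕ} {u v : DVar N} (h : u ≠ v) :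
    (m - Finsupp.single u 1 : DVar N →₀ ℕ) v = m v := by
  simp [Finsupp.tsub_apply, Finsupp.single_apply, h]

lemma add_sub_single_swap {m : DVar N →₀ ℕ} {u v : DVar N} (h : u ≠ v) :
    (m + Finsupp.single v 1) - Finsupp.single u 1
      = (m - Finsupp.single u 1) + Finsupp.single v 1 := by
  ext w
  simp only [Finsupp.add_apply, Finsupp.tsub_apply, Finsupp.single_apply]
  by_cases h1 : u = w <;> by_cases h2 : v = w <;> simp [h1, h2] <;>
    first
      | (exact absurd (h1.trans h2.symm) h)
      | omega

lemma add_sub_single_cancel (m : DVar N →₀ ℕ) (v : DVar N) :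
    (m + Finsupp.single v 1) - Finsupp.single v 1 = m := by
  ext w
  simp only [Finsupp.add_apply, Finsupp.tsub_apply, Finsupp.single_apply]
  split <;> omega

/-- termwise commutation for non-diagonal terms -/
lemma dxT_pd_term {f : DP N} {m : DVar N →₀ ℕ} {v u : DVar N} (h : u ≠ v) :
    ((m v : ℂ) + 1) * dxT f (m + Finsupp.single v 1) u = dxT (pd v f) m u := by
  rcases u with ⟨β, (_ | j)⟩ | w
  · rw [dxT_inl_zero, dxT_inl_zero, mul_zero]
  · rw [dxT_inl_succ, dxT_inl_succ, add_sub_single_swap h, pd_comm, co_pd v,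
      sub_single_apply_ne h]
  · rw [dxT_inr, dxT_inr, mul_zero]

/-- ∂/∂u^α_0 commutes with ∂_x -/
lemma pd0_dx (α : Fin N) (f : DP N) :
    pd (Sum.inl (α, 0)) (dx f) = dx (pd (Sum.inl (α, 0)) f) := by
  set v : DVar N := Sum.inl (α, 0) with hv
  apply dp_ext; intro m
  rw [co_pd, co_dx, co_dx, support_add_single, Finset.mul_sum]
  by_cases hvm : v ∈ m.support
  · rw [Finset.insert_eq_self.2 hvm]
    refine Finset.sum_congr rfl fun u hu => ?_
    by_cases huv : u = v
    · subst huv; rw [hv, dxT_inl_zero, dxT_inl_zero, mul_zero]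
    · exact dxT_pd_term huv
  · rw [Finset.sum_insert hvm, hv, dxT_inl_zero, mul_zero, zero_add]
    refine Finset.sum_congr rfl fun u hu => dxT_pd_term fun hh => ?_
    subst hh; exact hvm hu

/-- ∂/∂u^α_{i+1} and ∂_x : commutator is ∂/∂u^α_i -/
lemma pdsucc_dx (α : Fin N) (i : ℕ) (f : DP N) :
    pd (Sum.inl (α, i + 1)) (dx f)
      = dx (pd (Sum.inl (α, i + 1)) f) + pd (Sum.inl (α, i)) f := by
  set v : DVar N := Sum.inl (α, i + 1) with hv
  apply dp_ext; intro m
  rw [co_add, co_pd, co_dx, co_dx, support_add_single, Finset.mul_sum]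
  have hterm : ∀ u ∈ m.support, u ≠ v →
      ((m v : ℂ) + 1) * dxT f (m + Finsupp.single v 1) u = dxT (pd v f) m u :=
    fun u _ hu => dxT_pd_term hu
  have hdiagL : dxT f (m + Finsupp.single v 1) v = co (pd (Sum.inl (α, i)) f) m := by
    rw [hv, dxT_inl_succ, ← hv, add_sub_single_cancel]
  by_cases hvm : v ∈ m.support
  · rw [Finset.insert_eq_self.2 hvm]
    rw [Finset.sum_eq_sum_sdiff_singleton_add hvm, Finset.sum_eq_sum_sdiff_singleton_add hvm
      (fun u => dxT (pd v f) m u)]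
    have hmv : m v ≠ 0 := Finsupp.mem_support_iff.mp hvm
    have hdiagR : dxT (pd v f) m v = (m v : ℂ) * co (pd (Sum.inl (α, i)) f) m := by
      rw [hv, dxT_inl_succ, ← hv, pd_comm, co_pd v, sub_add_single hmv]
      have : ((m - Finsupp.single v 1 : DVar N →₀ ℕ) v : ℂ) + 1 = (m v : ℂ) := by
        rw [Finsupp.tsub_apply, Finsupp.single_apply, if_pos rfl]
        rw [Nat.cast_sub (by omega)]
        push_cast; ring
      rw [this]
    rw [hdiagL, hdiagR]
    rw [Finset.sum_congr rfl (fun u hu => hterm u (Finset.mem_sdiff.mp hu).1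
      (by simpa using (Finset.mem_sdiff.mp hu).2))]
    ring
  · rw [Finset.sum_insert hvm, hdiagL]
    have hmv : m v = 0 := by
      by_contra hc; exact hvm (Finsupp.mem_support_iff.mpr hc)
    rw [Finset.sum_congr rfl (fun u hu => hterm u hu (fun hh => by subst hh; exact hvm hu))]
    rw [hmv]
    push_cast; ring

end DP
namespace DP
variable {N : ℕ}

lemma pd0_dxIter (α : Fin N) (n : ℕ) (f : DP N) :
    pd (Sum.inl (α, 0)) (dx^[n] f) = dx^[n] (pd (Sum.inl (α, 0)) f) := by
  induction n generalizing f with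
  | zero => rfl
  | succ k ih =>
    rw [Function.iterate_succ_apply, Function.iterate_succ_apply, ih, pd0_dx]

lemma wt_add_single0 (m : DVar N →₀ ℕ) (α : Fin N) :
    wt (m + Finsupp.single (Sum.inl (α, 0)) 1) = wt m := by
  rw [wt_add, wt_single]; simp [lvl]

/-- ∂/∂u^α_0 commutes with the variational derivative -/
lemma pd0_vd (α : Fin N) (μ : Fin N) (f : DP N) :
    pd (Sum.inl (α, 0)) (vd μ f) = vd μ (pd (Sum.inl (α, 0)) f) := by
  set v : DVar N := Sum.inl (α, 0) with hv
  apply dp_ext; intro m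
  rw [co_pd, co_vd, co_vd, wt_add_single0, Finset.mul_sum]
  refine Finset.sum_congr rfl fun i _ => ?_
  rw [show ((m v : ℂ) + 1) * ((-1:ℂ)^i * co (dx^[i] (pd (Sum.inl (μ,i)) f)) (m + Finsupp.single v 1))
      = (-1:ℂ)^i * (((m v : ℂ) + 1) * co (dx^[i] (pd (Sum.inl (μ,i)) f)) (m + Finsupp.single v 1)) by ring]
  rw [← co_pd, pd0_dxIter, pd_comm]

/-- telescoping helper -/
lemma telescope (b : ℕ → ℂ) (M : ℕ) :
    ∑ i ∈ Finset.range (M + 1), (b i - if i = 0 then 0 else b (i - 1)) = b M := by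
  induction M with
  | zero => simp
  | succ k ih => rw [Finset.sum_range_succ, ih]; simp

/-- the variational derivative kills images of ∂_x -/
lemma vd_dx (μ : Fin N) (f : DP N) : vd μ (dx f) = 0 := by
  apply dp_ext; intro m
  rw [co_vd, co_zero]
  have hterm : ∀ i, (-1:ℂ)^i * co (dx^[i] (pd (Sum.inl (μ, i)) (dx f))) m
      = ((-1:ℂ)^i * co (dx^[i+1] (pd (Sum.inl (μ, i)) f)) m)
        - (if i = 0 then 0
            else (-1:ℂ)^(i-1) * co (dx^[i-1+1] (pd (Sum.inl (μ, i-1)) f)) m) := by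
    intro i
    cases i with
    | zero =>
      rw [if_pos rfl, sub_zero, Function.iterate_zero_apply, pd0_dx,
        Function.iterate_one]
    | succ k =>
      rw [if_neg (Nat.succ_ne_zero k), Nat.add_sub_cancel]
      rw [pdsucc_dx, dxIter_add, co_add, ← Function.iterate_succ_apply]
      rw [pow_succ]
      ring
  rw [Finset.sum_congr rfl fun i _ => hterm i]
  have key := telescope
    (fun i => (-1:ℂ)^i * co (dx^[i+1] (pd (Sum.inl (μ, i)) f)) m) (wt m)
  rw [key, co_dxIter_eq_zero _ _ _ (by omega), mul_zero]

lemma pd_of_isConst {f : DP N} (h : IsConst f) (μ : Fin N) (i : ℕ) :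
    pd (Sum.inl (μ, i)) f = 0 := by
  apply dp_ext; intro m
  rw [co_pd, co_zero]
  have : co f (m + Finsupp.single (Sum.inl (μ, i)) 1) = 0 := by
    by_contra hc
    have := h _ hc (Sum.inl (μ, i)) (by
      rw [Finsupp.mem_support_iff]
      simp [Finsupp.add_apply, Finsupp.single_apply])
    exact (by simp at this)
  rw [this, mul_zero]

lemma vd_of_isConst {f : DP N} (h : IsConst f) (μ : Fin N) : vd μ f = 0 := by
  apply dp_ext; intro m
  rw [co_vd, co_zero]
  refine Finset.sum_eq_zero fun i _ => ?_
  rw [pd_of_isConst h, dxIter_zero, co_zero, mul_zero]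

/-- vd as a linear map -/
noncomputable def vdL (μ : Fin N) : DP N →ₗ[ℂ] DP N where
  toFun := vd μ
  map_add' := vd_add μ
  map_smul' := vd_smul μ

lemma lfSub_le_ker_vdL (μ : Fin N) : lfSub N ≤ LinearMap.ker (vdL μ) := by
  rw [lfSub, sup_le_iff]
  constructor
  · intro f hf
    exact LinearMap.mem_ker.mpr (vd_of_isConst hf μ)
  · rw [Submodule.span_le]
    rintro _ ⟨f, rfl⟩
    exact LinearMap.mem_ker.mpr (vd_dx μ f)

lemma vd_congr_intg {f g : DP N} (h : intg f = intg g) (μ : Fin N) :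
    vd μ f = vd μ g := by
  have hmem : f - g ∈ lfSub N := by
    rw [← Submodule.Quotient.eq]
    exact h
  have := lfSub_le_ker_vdL μ hmem
  rw [LinearMap.mem_ker] at this
  have h2 : vdL μ f - vdL μ g = 0 := by rw [← map_sub]; exact this
  have := sub_eq_zero.mp h2
  exact this

lemma intg_rep (h : LF N) : intg (rep h) = h :=
  (Submodule.Quotient.mk_surjective (lfSub N) h).choose_spec

end DP
namespace DP
variable {N : ℕ}

lemma co_mul (f g : DP N) (m : DVar N →₀ ℕ) :
    co (f * g) m = ∑ p ∈ Finset.HasAntidiagonal.antidiagonal m, co f p.1 * co g p.2 := by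
  classical
  simp only [co]
  exact MvPowerSeries.coeff_mul m f g

lemma sum_antidiag_swap (m : DVar N →₀ ℕ) (F : (DVar N →₀ ℕ) → (DVar N →₀ ℕ) → ℂ) :
    ∑ p ∈ Finset.HasAntidiagonal.antidiagonal m, F p.1 p.2 = ∑ p ∈ Finset.HasAntidiagonal.antidiagonal m, F p.2 p.1 := by
  refine Finset.sum_nbij' (i := Prod.swap) (j := Prod.swap) ?_ ?_ ?_ ?_ ?_ <;>
    simp +contextual [Finset.HasAntidiagonal.mem_antidiagonal, add_comm]

lemma sum_antidiag_shift (v : DVar N) (m : DVar N →₀ ℕ)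
    (F G : (DVar N →₀ ℕ) → ℂ) :
    ∑ q ∈ Finset.HasAntidiagonal.antidiagonal m, (((q.1 : DVar N →₀ ℕ) v : ℂ) + 1) * (F (q.1 + Finsupp.single v 1) * G q.2)
      = ∑ p ∈ Finset.HasAntidiagonal.antidiagonal (m + Finsupp.single v 1), ((p.1 : DVar N →₀ ℕ) v : ℂ) * (F p.1 * G p.2) := by
  rw [← Finset.sum_filter_add_sum_filter_not (Finset.HasAntidiagonal.antidiagonal (m + Finsupp.single v 1))
    (fun p : (DVar N →₀ ℕ) × (DVar N →₀ ℕ) => p.1 v ≠ 0)]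
  have h2 : ∑ p ∈ (Finset.HasAntidiagonal.antidiagonal (m + Finsupp.single v 1)).filter (fun p : (DVar N →₀ ℕ) × (DVar N →₀ ℕ) => ¬ p.1 v ≠ 0),
      ((p.1 : DVar N →₀ ℕ) v : ℂ) * (F p.1 * G p.2) = 0 := by
    refine Finset.sum_eq_zero fun p hp => ?_
    rw [Finset.mem_filter] at hp
    have : p.1 v = 0 := by tauto
    rw [this]; simp
  rw [h2, add_zero]
  refine Finset.sum_nbij'
    (i := fun q : (DVar N →₀ ℕ) × (DVar N →₀ ℕ) => (q.1 + Finsupp.single v 1, q.2))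
    (j := fun p : (DVar N →₀ ℕ) × (DVar N →₀ ℕ) => (p.1 - Finsupp.single v 1, p.2))
    ?_ ?_ ?_ ?_ ?_
  · intro q hq
    rw [Finset.HasAntidiagonal.mem_antidiagonal] at hq
    rw [Finset.mem_filter, Finset.HasAntidiagonal.mem_antidiagonal]
    constructor
    · rw [← hq]; ext w; simp [Finsupp.add_apply]; ring
    · simp [Finsupp.add_apply, Finsupp.single_apply]
  · intro p hp
    rw [Finset.mem_filter, Finset.HasAntidiagonal.mem_antidiagonal] at hp
    rw [Finset.HasAntidiagonal.mem_antidiagonal]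
    have happ : ∀ w, p.1 w + p.2 w = m w + (Finsupp.single v 1 : DVar N →₀ ℕ) w :=
      fun w => by rw [← Finsupp.add_apply, ← Finsupp.add_apply, hp.1]
    ext w
    have := happ w
    simp only [Finsupp.add_apply, Finsupp.tsub_apply, Finsupp.single_apply] at this ⊢
    by_cases hw : v = w
    · subst hw
      have hp1 : p.1 v ≠ 0 := hp.2
      simp at this ⊢
      omega
    · simp [hw] at this ⊢
      omega
  · intro q hq
    simp [add_sub_single_cancel]
  · intro p hp
    rw [Finset.mem_filter] at hp
    simp [sub_add_single hp.2]
  · intro q hq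
    have h1 : ((q.1 + Finsupp.single v 1 : DVar N →₀ ℕ) v : ℂ) = ((q.1 : DVar N →₀ ℕ) v : ℂ) + 1 := by
      simp [Finsupp.add_apply, Finsupp.single_apply]
    rw [h1]

/-- Leibniz rule for partial derivatives -/
lemma pd_mul (v : DVar N) (f g : DP N) :
    pd v (f * g) = pd v f * g + f * pd v g := by
  apply dp_ext; intro m
  rw [co_add, co_pd, co_mul, co_mul, co_mul]
  have hL : ∑ p ∈ Finset.HasAntidiagonal.antidiagonal m, co (pd v f) p.1 * co g p.2
      = ∑ p ∈ Finset.HasAntidiagonal.antidiagonal (m + Finsupp.single v 1), ((p.1 : DVar N →₀ ℕ) v : ℂ) * (co f p.1 * co g p.2) := by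
    rw [← sum_antidiag_shift]
    refine Finset.sum_congr rfl fun q _ => ?_
    rw [co_pd]; ring
  have hR : ∑ p ∈ Finset.HasAntidiagonal.antidiagonal m, co f p.1 * co (pd v g) p.2
      = ∑ p ∈ Finset.HasAntidiagonal.antidiagonal (m + Finsupp.single v 1), ((p.2 : DVar N →₀ ℕ) v : ℂ) * (co f p.1 * co g p.2) := by
    rw [sum_antidiag_swap m (fun a b => co f a * co (pd v g) b)]
    rw [Finset.sum_congr rfl (fun q (_ : q ∈ Finset.HasAntidiagonal.antidiagonal m) =>
      (by rw [co_pd]; ring :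
        co f q.2 * co (pd v g) q.1
          = (((q.1 : DVar N →₀ ℕ) v : ℂ) + 1) * (co g (q.1 + Finsupp.single v 1) * co f q.2)))]
    rw [sum_antidiag_shift v m (co g) (co f)]
    rw [sum_antidiag_swap (m + Finsupp.single v 1)
      (fun a b => ((a : DVar N →₀ ℕ) v : ℂ) * (co g a * co f b))]
    exact Finset.sum_congr rfl fun p _ => by ring
  rw [hL, hR, ← Finset.sum_add_distrib, Finset.mul_sum]
  refine Finset.sum_congr rfl fun p hp => ?_
  rw [Finset.HasAntidiagonal.mem_antidiagonal] at hp
  have : ((p.1 : DVar N →₀ ℕ) v : ℂ) + ((p.2 : DVar N →₀ ℕ) v : ℂ) = (m v : ℂ) + 1 := by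
    have : p.1 v + p.2 v = m v + 1 := by
      rw [← Finsupp.add_apply, hp]
      simp [Finsupp.add_apply, Finsupp.single_apply]
    exact_mod_cast congrArg (Nat.cast : ℕ → ℂ) this
  rw [← this]; ring

end DP
namespace DP
variable {N : ℕ}

lemma level_le_wt {m : DVar N →₀ ℕ} {γ : Fin N} {k : ℕ} (h : m (Sum.inl (γ, k)) ≠ 0) :
    k ≤ wt m := by
  have hmem : Sum.inl (γ, k) ∈ m.support := Finsupp.mem_support_iff.mpr h
  have : lvl (Sum.inl (γ, k) : DVar N) * m (Sum.inl (γ, k))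
      ≤ ∑ v ∈ m.support, lvl v * m v :=
    Finset.single_le_sum (f := fun v => lvl v * m v) (fun v _ => Nat.zero_le _) hmem
  have hwt : wt m = ∑ v ∈ m.support, lvl v * m v := rfl
  have hk : lvl (Sum.inl (γ, k) : DVar N) = k := rfl
  rw [hwt]
  calc k = k * 1 := (mul_one k).symm
    _ ≤ k * m (Sum.inl (γ, k)) := Nat.mul_le_mul_left k (by omega)
    _ ≤ _ := by rw [← hk] at *; exact this

/-- Kernel of ∂_x consists of constants. -/
lemma isConst_of_dx_eq_zero {X : DP N} (h : dx X = 0) : IsConst X := by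
  classical
  intro m₀ hm₀ v hv
  rcases v with ⟨α₀, i₀⟩ | u
  swap
  · cases u; rfl
  exfalso
  rw [Finsupp.mem_support_iff] at hv
  set w₀ := wt m₀ with hw₀
  set Q : (DVar N →₀ ℕ) → Prop := fun m => co X m ≠ 0 ∧ wt m = w₀ with hQ
  set P : ℕ → Prop := fun k => ∃ m, Q m ∧ ∃ γ, m (Sum.inl (γ, k)) ≠ 0 with hP
  have hPi₀ : P i₀ := ⟨m₀, ⟨hm₀, rfl⟩, α₀, hv⟩
  have hle : ∀ k, P k → k ≤ w₀ := by
    rintro k ⟨m, ⟨_, hwm⟩, γ, hγ⟩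
    rw [← hwm]
    exact level_le_wt hγ
  set n := Nat.findGreatest P w₀ with hn
  have hPn : P n := Nat.findGreatest_spec (hle i₀ hPi₀) hPi₀
  have hmax : ∀ m, Q m → ∀ γ k, n < k → m (Sum.inl (γ, k)) = 0 := by
    intro m hQm γ k hk
    by_contra hc
    have hPk : P k := ⟨m, hQm, γ, hc⟩
    exact Nat.findGreatest_is_greatest hk (hle k hPk) hPk
  obtain ⟨ms, hQms, γ, hγ⟩ := hPn
  set u' : DVar N := Sum.inl (γ, n) with hu'
  set u : DVar N := Sum.inl (γ, n + 1) with hu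
  set m' : DVar N →₀ ℕ := (ms - Finsupp.single u' 1) + Finsupp.single u 1 with hm'
  have hmsu : ms u = 0 := hmax ms hQms γ (n+1) (Nat.lt_succ_self n)
  have huu' : u ≠ u' := by simp [hu, hu']
  have hm'u : m' u = 1 := by
    rw [hm', Finsupp.add_apply, Finsupp.tsub_apply, Finsupp.single_apply,
      Finsupp.single_apply]
    rw [if_neg (fun hh : u' = u => huu' hh.symm), if_pos rfl]
    omega
  have hmem : u ∈ m'.support := Finsupp.mem_support_iff.mpr (by rw [hm'u]; omega)
  -- m' - e_u = ms - e_u'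
  have hkey : m' - Finsupp.single u 1 = ms - Finsupp.single u' 1 := by
    rw [hm', add_sub_single_cancel]
  have hms_eq : (ms - Finsupp.single u' 1) + Finsupp.single u' 1 = ms := sub_add_single hγ
  -- weights
  have hwtm' : wt m' = w₀ + 1 := by
    have h1 : wt ms = wt (ms - Finsupp.single u' 1) + n := by
      conv_lhs => rw [← hms_eq]
      rw [wt_add, wt_single]
      have hl : lvl u' = n := rfl
      rw [hl]; omega
    rw [hm', wt_add, wt_single]
    have hl2 : lvl u = n + 1 := rfl
    rw [hl2]
    have := hQms.2
    omega
  -- evaluate co (dx X) m'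
  have hzero : co (dx X) m' = 0 := by rw [h, co_zero]
  rw [co_dx] at hzero
  have hdiag : dxT X m' u = ((ms u' : ℂ) - 1 + 1) * co X ms := by
    rw [hu, dxT_inl_succ, ← hu, ← hu', hkey]
    rw [co_pd, hms_eq]
    congr 1
    rw [Finsupp.tsub_apply, Finsupp.single_apply, if_pos rfl]
    rw [Nat.cast_sub (by omega)]
    norm_num
  have hother : ∀ w ∈ m'.support, w ≠ u → dxT X m' w = 0 := by
    intro w hw hwu
    rcases w with ⟨β, (_ | j)⟩ | uu
    · rfl
    swap
    · rfl
    rw [dxT_inl_succ, co_pd]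
    set μ : DVar N →₀ ℕ := (m' - Finsupp.single (Sum.inl (β, j+1)) 1) + Finsupp.single (Sum.inl (β, j)) 1 with hμ
    have hcoμ : co X μ = 0 := by
      by_contra hc
      rw [Finsupp.mem_support_iff] at hw
      have hwtμ : wt μ = w₀ := by
        have h1 : wt m' = wt (m' - Finsupp.single (Sum.inl (β, j+1)) 1) + (j+1) := by
          conv_lhs => rw [← sub_add_single hw]
          rw [wt_add, wt_single]
          have hl : lvl (Sum.inl (β, j+1) : DVar N) = j + 1 := rfl
          rw [hl]; omega
        rw [hμ, wt_add, wt_single]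
        have h2 : lvl (Sum.inl (β, j) : DVar N) = j := rfl
        rw [h2]
        omega
      have hQμ : Q μ := ⟨hc, hwtμ⟩
      have hthis : μ u = 0 := hmax μ hQμ γ (n+1) (Nat.lt_succ_self n)
      rw [hμ, Finsupp.add_apply, Finsupp.tsub_apply, Finsupp.single_apply,
        Finsupp.single_apply] at hthis
      rw [if_neg (fun hh : Sum.inl (β, j+1) = u => hwu hh), hm'u] at hthis
      split_ifs at hthis <;> omega
    rw [hcoμ, mul_zero]
  rw [Finset.sum_eq_single_of_mem u hmem hother, hdiag] at hzero
  have : (ms u' : ℂ) - 1 + 1 = (ms u' : ℂ) := by ring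
  rw [this] at hzero
  rcases mul_eq_zero.mp hzero with h1 | h2
  · exact hγ (by exact_mod_cast h1)
  · exact hQms.1 h2

end DP
namespace DP
variable {N : ℕ}

noncomputable def pdL (v : DVar N) : DP N →ₗ[ℂ] DP N where
  toFun := pd v
  map_add' := pd_add v
  map_smul' := pd_smul v

@[simp] lemma pdL_apply (v : DVar N) (f : DP N) : pdL v f = pd v f := rfl

noncomputable def dxL : DP N →ₗ[ℂ] DP N where
  toFun := dx
  map_add' := dx_add
  map_smul' := dx_smul

@[simp] lemma dxL_apply (f : DP N) : dxL f = dx f := rfl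

lemma pd_sum {s : Finset (Fin N)} (v : DVar N) (F : Fin N → DP N) :
    pd v (∑ x ∈ s, F x) = ∑ x ∈ s, pd v (F x) := map_sum (pdL v) F s

lemma isConst_one : IsConst (1 : DP N) := by
  intro m hm v hv
  exfalso
  have : co (1 : DP N) m = if m = 0 then 1 else 0 := MvPowerSeries.coeff_one m
  rw [this] at hm
  split_ifs at hm with h
  · subst h; simp at hv
  · exact hm rfl

lemma isConst_smul (c : ℂ) {f : DP N} (h : IsConst f) : IsConst (c • f) :=
  (constSub N).smul_mem c h

lemma dx_of_isConst {f : DP N} (h : IsConst f) : dx f = 0 := by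
  apply dp_ext; intro m
  rw [co_dx, co_zero]
  refine Finset.sum_eq_zero fun v _ => ?_
  rcases v with ⟨β, (_ | j)⟩ | u
  · rfl
  · rw [dxT_inl_succ, pd_of_isConst h, co_zero]
  · rfl

lemma pd_one (v : DVar N) : pd v (1 : DP N) = 0 := by
  apply dp_ext; intro m
  rw [co_pd, co_zero]
  have : co (1 : DP N) (m + Finsupp.single v 1) = 0 := by
    rw [show co (1 : DP N) (m + Finsupp.single v 1)
        = if m + Finsupp.single v 1 = 0 then 1 else 0 from MvPowerSeries.coeff_one _]
    rw [if_neg]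
    intro hc
    have := congrArg (fun mm : DVar N →₀ ℕ => mm v) hc
    simp [Finsupp.add_apply, Finsupp.single_apply] at this
  rw [this, mul_zero]

lemma pd_uv0 (ν : Fin N) (i : ℕ) (μ : Fin N) :
    pd (Sum.inl (ν, i)) (uv μ 0) = if ν = μ ∧ i = 0 then 1 else 0 := by
  have hX : ∀ mm : DVar N →₀ ℕ, co (uv μ 0) mm
      = if mm = Finsupp.single (Sum.inl (μ, 0)) 1 then 1 else 0 := fun mm =>
    MvPowerSeries.coeff_X mm _
  by_cases hc : ν = μ ∧ i = 0
  · obtain ⟨h1, h2⟩ := hc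
    subst h1; subst h2
    rw [if_pos ⟨rfl, rfl⟩]
    apply dp_ext; intro m
    rw [co_pd, hX]
    rw [show co (1 : DP N) m = if m = 0 then 1 else 0 from MvPowerSeries.coeff_one m]
    by_cases hm : m = 0
    · subst hm; simp
    · rw [if_neg hm, if_neg, mul_zero]
      intro hcc
      exact hm (add_eq_right.mp hcc)
  · rw [if_neg hc]
    apply dp_ext; intro m
    rw [co_pd, hX, co_zero, if_neg, mul_zero]
    intro hcc
    have h2 : (Finsupp.single (Sum.inl (μ, 0)) 1 : DVar N →₀ ℕ) (Sum.inl (ν, i)) ≠ 0 := by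
      rw [← hcc]
      simp [Finsupp.add_apply, Finsupp.single_apply]
    have h3 : (Sum.inl (μ, 0) : DVar N) = Sum.inl (ν, i) := by
      by_contra hne
      rw [Finsupp.single_apply, if_neg hne] at h2
      exact h2 rfl
    have h4 := Sum.inl.inj h3
    exact hc ⟨(congrArg Prod.fst h4).symm, (congrArg Prod.snd h4).symm⟩

end DP
namespace DP
variable {N : ℕ}

@[simp] lemma vdL_apply (μ : Fin N) (f : DP N) : vdL μ f = vd μ f := rfl

lemma vd_uv0 (ν μ : Fin N) : vd ν (uv μ 0) = if ν = μ then 1 else 0 := by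
  apply dp_ext; intro m
  rw [co_vd]
  rw [Finset.sum_eq_single_of_mem 0 (Finset.mem_range.mpr (by omega))]
  · rw [pow_zero, one_mul, Function.iterate_zero_apply, pd_uv0]
    by_cases hc : ν = μ
    · rw [if_pos ⟨hc, rfl⟩, if_pos hc]
    · rw [if_neg (fun hh => hc hh.1), if_neg hc]
  · intro i _ hi
    rw [pd_uv0, if_neg (fun hh => hi hh.2), dxIter_zero, co_zero, mul_zero]

/-- a general substitute for pbEta with arbitrary argument tuple -/
noncomputable def PB (η : Matrix (Fin N) (Fin N) ℂ) (f : DP N) (g : Fin N → DP N) : DP N :=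
  ofCo fun m => ∑ γ : Fin N, ∑ᶠ n : ℕ,
    co (pd (Sum.inl (γ, n)) f * dx^[n] (etaAp η γ g)) m

lemma pbEta_eq_PB (η : Matrix (Fin N) (Fin N) ℂ) (f : DP N) (h : LF N) :
    pbEta η f h = PB η f (fun ν => vdQ ν h) := rfl

lemma co_mul_dxIter_zero (A B : DP N) (m : DVar N →₀ ℕ) {n : ℕ} (h : wt m < n) :
    co (A * dx^[n] B) m = 0 := by
  rw [co_mul]
  refine Finset.sum_eq_zero fun p hp => ?_
  rw [Finset.HasAntidiagonal.mem_antidiagonal] at hp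
  have hw : wt p.2 ≤ wt m := by
    rw [← hp, wt_add]; omega
  rw [co_dxIter_eq_zero n B p.2 (by omega), mul_zero]

lemma co_PB (η : Matrix (Fin N) (Fin N) ℂ) (f : DP N) (g : Fin N → DP N)
    (m : DVar N →₀ ℕ) :
    co (PB η f g) m = ∑ γ : Fin N, ∑ n ∈ Finset.range (wt m + 1),
      co (pd (Sum.inl (γ, n)) f * dx^[n] (etaAp η γ g)) m := by
  rw [PB, co_ofCo]
  refine Finset.sum_congr rfl fun γ _ => ?_
  apply finsum_eq_finset_sum_of_support_subset
  intro n hn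
  simp only [Function.mem_support] at hn
  simp only [Finset.coe_range, Set.mem_Iio]
  by_contra hc
  exact hn (co_mul_dxIter_zero _ _ _ (by omega))

lemma pd0_etaAp (α : Fin N) (η : Matrix (Fin N) (Fin N) ℂ) (γ : Fin N)
    (g : Fin N → DP N) :
    pd (Sum.inl (α, 0)) (etaAp η γ g) = etaAp η γ (fun ν => pd (Sum.inl (α, 0)) (g ν)) := by
  rw [etaAp, etaAp, pd_sum]
  refine Finset.sum_congr rfl fun ν _ => ?_
  rw [pd_smul, pd0_dx]

/-- the key commutation: ∂/∂u^α_0 of a PB bracket -/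
lemma pd0_PB (α : Fin N) (η : Matrix (Fin N) (Fin N) ℂ) (f : DP N) (g : Fin N → DP N) :
    pd (Sum.inl (α, 0)) (PB η f g)
      = PB η (pd (Sum.inl (α, 0)) f) g
        + PB η f (fun ν => pd (Sum.inl (α, 0)) (g ν)) := by
  set v : DVar N := Sum.inl (α, 0) with hv
  apply dp_ext; intro m
  rw [co_pd, co_add, co_PB, co_PB, co_PB, wt_add_single0, Finset.mul_sum,
    ← Finset.sum_add_distrib]
  refine Finset.sum_congr rfl fun γ _ => ?_
  rw [Finset.mul_sum, ← Finset.sum_add_distrib]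
  refine Finset.sum_congr rfl fun n _ => ?_
  rw [← co_pd, pd_mul, co_add, pd_comm, pd0_dxIter, pd0_etaAp]

lemma PB_zero_right (η : Matrix (Fin N) (Fin N) ℂ) (f : DP N) {g : Fin N → DP N}
    (hc : ∀ ν, IsConst (g ν)) : PB η f g = 0 := by
  have hE : ∀ γ, etaAp η γ g = 0 := by
    intro γ
    rw [etaAp]
    refine Finset.sum_eq_zero fun ν _ => ?_
    rw [dx_of_isConst (hc ν), smul_zero]
  apply dp_ext; intro m
  rw [co_PB, co_zero]
  refine Finset.sum_eq_zero fun γ _ => Finset.sum_eq_zero fun n _ => ?_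
  rw [hE, dxIter_zero, mul_zero, co_zero]

lemma PB_zero_left (η : Matrix (Fin N) (Fin N) ℂ) {f : DP N} (hc : IsConst f)
    (g : Fin N → DP N) : PB η f g = 0 := by
  apply dp_ext; intro m
  rw [co_PB, co_zero]
  refine Finset.sum_eq_zero fun γ _ => Finset.sum_eq_zero fun n _ => ?_
  rw [pd_of_isConst hc, zero_mul, co_zero]

end DP

open DP in
/-- string-type equations for the two-point functions of the
double ramification hierarchy.  `K = η∂_x`; `G α d = ḡ_{α,d}` are the
pairwise commuting Hamiltonians, `ḡ_{1,0}` generates spatial translations and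
`∂ḡ_{α,d+1}/∂u^1 = ḡ_{α,d}` for `d ≥ −1` (with `ḡ_{α,−1} = ∫ η_{αμ}u^μ dx`,
lower indices here denoting entries of `η` itself).  The densities
`h_{α,p} := δḡ_{α,p+1}/δu^1` (so `h α p` stands for `h_{α,p−1}`) and their
two-point functions `W α p β q = Ω_{α,p;β,q}` (with `Ω ≡ 0` for a negative
index, rendered by the `if … then 0` clauses) satisfy:
(i) `∂h_{α,d}/∂u^1 = h_{α,d−1}` for all `d ≥ 0`;
(ii) `∂Ω_{α,p;β,q}/∂u^1 − Ω_{α,p−1;β,q} − Ω_{α,p;β,q−1}` is a constant in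
`ℂ[[ε]]`, equal to `(∂Ω_{α,p;β,q}/∂u^1)|_{u^*_*=0}`. -/
theorem statement7 (N : ℕ) [NeZero N] (η : Matrix (Fin N) (Fin N) ℂ)
    (hsym : η.IsSymm) (hnd : IsUnit η.det)
    (G : Fin N → ℕ → LF N)
    (hmem : ∀ α d, G α d ∈ LFHomog N 0)
    (hcomm : ∀ α d β e, lfbEta η (G α d) (G β e) = 0)
    (htransl : ∀ α : Fin N, etaAp η α (fun μ => vdQ μ (G 0 0)) = uv α 1)
    (hder : ∀ α d, pdQ (Sum.inl (0, 0)) (G α (d + 1)) = G α d)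
    (hder0 : ∀ α, pdQ (Sum.inl (0, 0)) (G α 0) = intg (∑ μ : Fin N, η α μ • uv μ 0))
    (h : Fin N → ℕ → DP N) (hdef : ∀ α p, h α p = vdQ 0 (G α p))
    (W : Fin N → ℕ → Fin N → ℕ → DP N)
    (hW : ∀ (α : Fin N) (p : ℕ) (β : Fin N) (q : ℕ),
      (IsHomog 0 (W α p β q) ∧ IsDiffPoly (W α p β q)) ∧
        dx (W α p β q) = pbEta η (h α p) (G β q) ∧ VanishAtU0 (W α p β q)) :
    (∀ (α : Fin N) (d : ℕ), pd (Sum.inl (0, 0)) (h α (d + 1)) = h α d) ∧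
    (∀ (α : Fin N) (p : ℕ) (β : Fin N) (q : ℕ),
      IsConst (pd (Sum.inl (0, 0)) (W α p β q)
          - (if p = 0 then 0 else W α (p - 1) β q)
          - (if q = 0 then 0 else W α p β (q - 1))) ∧
      ∀ k : ℕ,
        co (pd (Sum.inl (0, 0)) (W α p β q)
            - (if p = 0 then 0 else W α (p - 1) β q)
            - (if q = 0 then 0 else W α p β (q - 1)))
          (Finsupp.single (Sum.inr ()) k)
        = co (pd (Sum.inl (0, 0)) (W α p β q)) (Finsupp.single (Sum.inr ()) k)) := by
  classical
  -- part (i)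
  have hpdh : ∀ (α : Fin N) (d : ℕ),
      pd (Sum.inl ((0 : Fin N), 0)) (h α (d + 1)) = h α d := by
    intro α d
    rw [hdef α (d+1), hdef α d]
    show pd (Sum.inl (0, 0)) (vd 0 (rep (G α (d+1)))) = vd 0 (rep (G α d))
    rw [pd0_vd]
    exact vd_congr_intg ((hder α d).trans (intg_rep (G α d)).symm) 0
  -- vd of the eta row
  have hvdrow : ∀ (α ν : Fin N),
      vd ν (∑ μ : Fin N, η α μ • uv μ 0) = η α ν • (1 : DP N) := by
    intro α ν
    have hsum : vd ν (∑ μ : Fin N, η α μ • uv μ 0)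
        = ∑ μ : Fin N, vd ν (η α μ • uv μ 0) :=
      map_sum (vdL ν) (fun μ => η α μ • uv μ 0) Finset.univ
    rw [hsum]
    have : ∀ μ : Fin N, vd ν (η α μ • uv μ 0)
        = if ν = μ then η α μ • (1 : DP N) else 0 := by
      intro μ
      rw [vd_smul, vd_uv0, smul_ite, smul_zero]
    rw [Finset.sum_congr rfl fun μ _ => this μ]
    rw [Finset.sum_ite_eq Finset.univ ν (fun μ => η α μ • (1 : DP N)),
      if_pos (Finset.mem_univ ν)]
  -- ∂/∂u^1 of h α 0 is constant
  have hpdh0 : ∀ α : Fin N,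
      pd (Sum.inl ((0 : Fin N), 0)) (h α 0) = η α 0 • (1 : DP N) := by
    intro α
    rw [hdef α 0]
    show pd (Sum.inl (0, 0)) (vd 0 (rep (G α 0))) = _
    rw [pd0_vd, vd_congr_intg (hder0 α) 0, hvdrow]
  -- ∂/∂u^1 of vdQ's
  have hgq : ∀ (β : Fin N) (q : ℕ),
      (fun ν => pd (Sum.inl ((0 : Fin N), 0)) (vdQ ν (G β (q+1))))
        = fun ν => vdQ ν (G β q) := by
    intro β q
    funext ν
    show pd (Sum.inl (0, 0)) (vd ν (rep (G β (q+1)))) = vd ν (rep (G β q))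
    rw [pd0_vd]
    exact vd_congr_intg ((hder β q).trans (intg_rep (G β q)).symm) ν
  have hgq0 : ∀ (β ν : Fin N),
      pd (Sum.inl ((0 : Fin N), 0)) (vdQ ν (G β 0)) = η β ν • (1 : DP N) := by
    intro β ν
    show pd (Sum.inl (0, 0)) (vd ν (rep (G β 0))) = _
    rw [pd0_vd, vd_congr_intg (hder0 β) ν, hvdrow]
  have hdx : ∀ (α : Fin N) (p : ℕ) (β : Fin N) (q : ℕ),
      dx (W α p β q) = PB η (h α p) (fun ν => vdQ ν (G β q)) :=
    fun α p β q => ((hW α p β q).2.1).trans (pbEta_eq_PB η (h α p) (G β q))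
  refine ⟨hpdh, fun α p β q => ?_⟩
  have hA : PB η (pd (Sum.inl ((0 : Fin N), 0)) (h α p)) (fun ν => vdQ ν (G β q))
      = dx (if p = 0 then 0 else W α (p-1) β q) := by
    cases p with
    | zero =>
      rw [if_pos rfl, dx_zero, hpdh0,
        PB_zero_left η (isConst_smul (η α 0) isConst_one)]
    | succ p' =>
      rw [if_neg (Nat.succ_ne_zero p'), Nat.add_sub_cancel, hpdh, hdx]
  have hB : PB η (h α p) (fun ν => pd (Sum.inl ((0 : Fin N), 0)) (vdQ ν (G β q)))
      = dx (if q = 0 then 0 else W α p β (q-1)) := by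
    cases q with
    | zero =>
      rw [if_pos rfl, dx_zero]
      refine PB_zero_right η (h α p) fun ν => ?_
      rw [hgq0]
      exact isConst_smul (η β ν) isConst_one
    | succ q' =>
      rw [if_neg (Nat.succ_ne_zero q'), Nat.add_sub_cancel, hgq, hdx]
  have hdxX : dx (pd (Sum.inl ((0 : Fin N), 0)) (W α p β q)
      - (if p = 0 then 0 else W α (p - 1) β q)
      - (if q = 0 then 0 else W α p β (q - 1))) = 0 := by
    rw [dx_sub, dx_sub, ← pd0_dx, hdx, pd0_PB, hA, hB]
    ring
  refine ⟨isConst_of_dx_eq_zero hdxX, fun k => ?_⟩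
  rw [co_sub, co_sub]
  have e1 : co (if p = 0 then 0 else W α (p-1) β q) (Finsupp.single (Sum.inr ()) k) = 0 := by
    split
    · exact co_zero _
    · exact (hW α (p-1) β q).2.2 k
  have e2 : co (if q = 0 then 0 else W α p β (q-1)) (Finsupp.single (Sum.inr ()) k) = 0 := by
    split
    · exact co_zero _
    · exact (hW α p β (q-1)).2.2 k
  rw [e1, e2]
  ring
end

section
/- Let f ∈ A_N be a differential polynomial homogeneous of degree d (with respect to deg u^α_i = i). Perform the substitution u^γ_n = Σ_{a∈ℤ} (ia)^n p^γ_a e^{iax}, and write the result as the formal Fourier series f = Σ_{k≥0} Σ_{a_1,…,a_k∈ℤ} P_{α_1,…,α_k}(a_1,…,a_k) p^{α_1}_{a_1}⋯p^{α_k}_{a_k} e^{ix(a_1+⋯+a_k)}, where the P_{α_1,…,α_k} are polynomials of degree d in a_1,…,a_k (taken symmetric under simultaneous permutation of the index pairs (α_j, a_j)). Then the evaluation of f at u^γ_n = δ^{γ,1}δ_{n,1} equals (−i)^d times the coefficient of the monomial a_1 a_2 ⋯ a_d in P_{1,…,1}(a_1,…,a_d) (the polynomial with k = d and all α_j = 1).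 -/
/-! Formal Fourier series: power series in the variables `p^γ_a`
(`γ = 1, …, N`, `a ∈ ℤ`) with coefficients in the group algebra `ℂ[ℤ]`, the
element `z^a` of which stands for `e^{iax}`. -/
abbrev FR (N : ℕ) : Type := MvPowerSeries (Fin N × ℤ) (AddMonoidAlgebra ℂ ℤ)

namespace DP

variable {N : ℕ}

/-- The formal Fourier series `Σ_{a∈ℤ} (ia)^n p^γ_a e^{iax}` substituted for
the variable `u^γ_n`. -/
noncomputable def facF (γ : Fin N) (n : ℕ) : FR N := by
  classical
  exact
  fun M => if h : ∃ a : ℤ, M = Finsupp.single (γ, a) 1 then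
    (AddMonoidAlgebra.single h.choose ((Complex.I * (h.choose : ℂ)) ^ n) : AddMonoidAlgebra ℂ ℤ)
  else 0

/-- The substitution value for each variable (the variable `ε` does not occur
under the hypothesis that `f ∈ A_N`, i.e. is `ε`-free). -/
noncomputable def facDV : DVar N → FR N
  | Sum.inl (γ, n) => facF γ n
  | Sum.inr _ => 1

/-- The result of substituting `u^γ_n = Σ_{a∈ℤ} (ia)^n p^γ_a e^{iax}` in a
differential polynomial, as a formal Fourier series. -/
noncomputable def subF (f : DP N) (M : (Fin N × ℤ) →₀ ℕ) : AddMonoidAlgebra ℂ ℤ :=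
  ∑ᶠ m : DVar N →₀ ℕ,
    DP.co f m •
      MvPowerSeries.coeff (R := AddMonoidAlgebra ℂ ℤ) M (∏ v ∈ m.support, facDV v ^ m v)

/-- Evaluation at `u^γ_n = δ^{γ,1}δ_{n,1}`, i.e. at `u^1_1 = 1` and all other
variables equal to `0`. -/
noncomputable def evalAt11 [NeZero N] (f : DP N) : ℂ :=
  ∑ᶠ k : ℕ, DP.co f (Finsupp.single (Sum.inl ((0 : Fin N), 1)) k)

end DP

section Aux
open DP Complex

noncomputable def TT : AddMonoidAlgebra ℂ ℤ →ₐ[ℂ] ℂ := AddMonoidAlgebra.lift ℂ ℂ ℤ 1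

lemma TT_single (a : ℤ) (c : ℂ) : TT (AddMonoidAlgebra.single a c) = c := by
  show TT (AddMonoidAlgebra.single a c) = c
  rw [TT, AddMonoidAlgebra.lift_single]
  simp

/-- The target monomial `p_1^s p_0^t` in the `γ = 0` direction. -/
noncomputable def MM (N : ℕ) [NeZero N] (s t : ℕ) : (Fin N × ℤ) →₀ ℕ :=
  Finsupp.single ((0 : Fin N), (1 : ℤ)) s + Finsupp.single ((0 : Fin N), (0 : ℤ)) t

variable {N : ℕ} [NeZero N]

lemma MM_apply (s t : ℕ) (γ : Fin N) (a : ℤ) :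
    MM N s t (γ, a) = (if γ = 0 ∧ a = 1 then s else 0) + (if γ = 0 ∧ a = 0 then t else 0) := by
  simp only [MM, Finsupp.add_apply, Finsupp.single_apply]
  congr 1
  · by_cases h : γ = 0 ∧ a = 1
    · rw [if_pos h, if_pos (Prod.ext h.1.symm h.2.symm)]
    · rw [if_neg h, if_neg]
      intro hh
      exact h ⟨(congrArg Prod.fst hh).symm, (congrArg Prod.snd hh).symm⟩
  · by_cases h : γ = 0 ∧ a = 0
    · rw [if_pos h, if_pos (Prod.ext h.1.symm h.2.symm)]
    · rw [if_neg h, if_neg]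
      intro hh
      exact h ⟨(congrArg Prod.fst hh).symm, (congrArg Prod.snd hh).symm⟩

lemma MM_eq_zero_iff (s t : ℕ) : MM N s t = 0 ↔ s = 0 ∧ t = 0 := by
  constructor
  · intro h
    have h1 : MM N s t ((0 : Fin N), (1 : ℤ)) = 0 := by rw [h]; rfl
    have h0 : MM N s t ((0 : Fin N), (0 : ℤ)) = 0 := by rw [h]; rfl
    rw [MM_apply] at h1 h0
    simp at h1 h0
    exact ⟨h1, h0⟩
  · rintro ⟨rfl, rfl⟩
    simp [MM]

omit [NeZero N] in
lemma facF_coeff_single (γ : Fin N) (n : ℕ) (a : ℤ) :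
    MvPowerSeries.coeff (R := AddMonoidAlgebra ℂ ℤ) (Finsupp.single (γ, a) 1) (facF γ n)
      = AddMonoidAlgebra.single a ((Complex.I * (a : ℂ)) ^ n) := by
  rw [MvPowerSeries.coeff_apply]
  have h : ∃ b : ℤ, (Finsupp.single (γ, a) 1 : (Fin N × ℤ) →₀ ℕ) = Finsupp.single (γ, b) 1 :=
    ⟨a, rfl⟩
  show (facF γ n) (Finsupp.single (γ, a) 1) = _
  unfold facF
  rw [dif_pos h]
  have hc : a = h.choose := by
    have hs := h.choose_spec
    have h2 := Finsupp.single_left_injective (α := Fin N × ℤ) (one_ne_zero (α := ℕ)) hs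
    exact (congrArg Prod.snd h2)
  rw [← hc]

omit [NeZero N] in
lemma facF_coeff_ne (γ : Fin N) (n : ℕ) (p : (Fin N × ℤ) →₀ ℕ)
    (hp : ∀ a : ℤ, p ≠ Finsupp.single (γ, a) 1) :
    MvPowerSeries.coeff (R := AddMonoidAlgebra ℂ ℤ) p (facF γ n) = 0 := by
  rw [MvPowerSeries.coeff_apply]
  show (facF γ n) p = 0
  unfold facF
  rw [dif_neg]
  rintro ⟨a, ha⟩
  exact hp a ha

end Aux
section Aux2
open DP Complex

noncomputable def sgl (a : ℤ) (c : ℂ) : AddMonoidAlgebra ℂ ℤ := AddMonoidAlgebra.single a c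

lemma TT_sgl (a : ℤ) (c : ℂ) : TT (sgl a c) = c := TT_single a c

lemma sgl_zero_one : sgl 0 1 = 1 := by
  rw [sgl]
  exact (AddMonoidAlgebra.one_def (R := ℂ) (M := ℤ)).symm

variable {N : ℕ} [NeZero N]

lemma MM_succ_left {s : ℕ} (hs : 1 ≤ s) (t : ℕ) :
    MM N s t = Finsupp.single ((0:Fin N),(1:ℤ)) 1 + MM N (s-1) t := by
  rw [MM, MM, ← add_assoc, ← Finsupp.single_add]
  congr 2
  omega

lemma MM_succ_right (s : ℕ) {t : ℕ} (ht : 1 ≤ t) :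
    MM N s t = Finsupp.single ((0:Fin N),(0:ℤ)) 1 + MM N s (t-1) := by
  rw [MM, MM, add_left_comm]
  congr 1
  rw [← Finsupp.single_add]
  congr 1
  omega

lemma coeff_facF_mul (γ : Fin N) (n : ℕ) (g : FR N) (s t : ℕ) :
    MvPowerSeries.coeff (R := AddMonoidAlgebra ℂ ℤ) (MM N s t) (facF γ n * g)
      = if γ = 0 then
          (if 1 ≤ s then
            sgl 1 ((Complex.I : ℂ) ^ n) *
              MvPowerSeries.coeff (R := AddMonoidAlgebra ℂ ℤ) (MM N (s-1) t) g
          else 0)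
          + (if 1 ≤ t then
              (if n = 0 then MvPowerSeries.coeff (R := AddMonoidAlgebra ℂ ℤ) (MM N s (t-1)) g else 0)
            else 0)
        else 0 := by
  classical
  set p1 : (Fin N × ℤ) →₀ ℕ := Finsupp.single ((0:Fin N),(1:ℤ)) 1 with hp1
  set p0 : (Fin N × ℤ) →₀ ℕ := Finsupp.single ((0:Fin N),(0:ℤ)) 1 with hp0
  have hne : p1 ≠ p0 := by
    intro h
    have h2 := Finsupp.single_left_injective (α := Fin N × ℤ) (one_ne_zero (α := ℕ)) h
    simp [Prod.ext_iff] at h2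
  rw [MvPowerSeries.coeff_mul]
  have key : ∀ x : ((Fin N × ℤ) →₀ ℕ) × ((Fin N × ℤ) →₀ ℕ),
      x ∈ Finset.HasAntidiagonal.antidiagonal (MM N s t) →
      MvPowerSeries.coeff (R := AddMonoidAlgebra ℂ ℤ) x.1 (facF γ n) ≠ 0 →
      γ = 0 ∧ (x.1 = p1 ∨ x.1 = p0) := by
    intro x hx hc
    by_cases hform : ∃ a : ℤ, x.1 = Finsupp.single (γ, a) 1
    · obtain ⟨a, ha⟩ := hform
      have hmem := Finset.HasAntidiagonal.mem_antidiagonal.mp hx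
      have hle : (1:ℕ) ≤ MM N s t (γ, a) := by
        have hh : MM N s t (γ, a) = x.1 (γ, a) + x.2 (γ, a) := by
          rw [← hmem, Finsupp.add_apply]
        rw [hh, ha, Finsupp.single_eq_same]
        exact Nat.le_add_right 1 _
      rw [MM_apply] at hle
      by_cases hγ : γ = 0
      · subst hγ
        refine ⟨rfl, ?_⟩
        by_cases ha1 : a = 1
        · left; rw [ha, ha1]
        · by_cases ha0 : a = 0
          · right; rw [ha, ha0]
          · simp [ha1, ha0] at hle
      · simp [hγ] at hle
    · push_neg at hform
      exact absurd (facF_coeff_ne γ n x.1 hform) hc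
  by_cases hγ : γ = 0
  · subst hγ
    rw [if_pos rfl]
    have split : ∀ x ∈ Finset.HasAntidiagonal.antidiagonal (MM N s t),
        (MvPowerSeries.coeff (R := AddMonoidAlgebra ℂ ℤ) x.1 (facF (0:Fin N) n) *
          MvPowerSeries.coeff (R := AddMonoidAlgebra ℂ ℤ) x.2 g)
        = (if x.1 = p1 then MvPowerSeries.coeff (R := AddMonoidAlgebra ℂ ℤ) x.1 (facF (0:Fin N) n) *
            MvPowerSeries.coeff (R := AddMonoidAlgebra ℂ ℤ) x.2 g else 0)
          + (if x.1 = p0 then MvPowerSeries.coeff (R := AddMonoidAlgebra ℂ ℤ) x.1 (facF (0:Fin N) n) *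
            MvPowerSeries.coeff (R := AddMonoidAlgebra ℂ ℤ) x.2 g else 0) := by
      intro x hx
      by_cases h1 : x.1 = p1
      · rw [if_pos h1, if_neg (by rw [h1]; exact hne), add_zero]
      · by_cases h0 : x.1 = p0
        · rw [if_neg h1, if_pos h0, zero_add]
        · rw [if_neg h1, if_neg h0, add_zero]
          by_cases hc : MvPowerSeries.coeff (R := AddMonoidAlgebra ℂ ℤ) x.1 (facF (0:Fin N) n) = 0
          · rw [hc, zero_mul]
          · rcases (key x hx hc).2 with h|h
            · exact absurd h h1
            · exact absurd h h0
    rw [Finset.sum_congr rfl split, Finset.sum_add_distrib]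
    congr 1
    · by_cases hs : 1 ≤ s
      · rw [if_pos hs]
        rw [Finset.sum_eq_single (p1, MM N (s-1) t)]
        · rw [if_pos rfl]
          have hcoe : MvPowerSeries.coeff (R := AddMonoidAlgebra ℂ ℤ) p1 (facF (0:Fin N) n)
              = AddMonoidAlgebra.single (1:ℤ) ((Complex.I:ℂ)^n) := by
            rw [hp1, facF_coeff_single]
            norm_num
          rw [hcoe]
          rfl
        · intro b hb hbne
          by_cases h1 : b.1 = p1
          · exfalso
            apply hbne
            have hmem := Finset.HasAntidiagonal.mem_antidiagonal.mp hb
            have hcan : p1 + b.2 = p1 + MM N (s-1) t := by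
              rw [← MM_succ_left hs, ← hmem, h1]
            exact Prod.ext h1 (add_left_cancel hcan)
          · rw [if_neg h1]
        · intro habs
          exact absurd (Finset.HasAntidiagonal.mem_antidiagonal.mpr (MM_succ_left hs t).symm) habs
      · rw [if_neg hs]
        apply Finset.sum_eq_zero
        intro x hx
        rw [if_neg]
        intro h1
        have hmem := Finset.HasAntidiagonal.mem_antidiagonal.mp hx
        have hh : (1:ℕ) ≤ MM N s t ((0:Fin N), (1:ℤ)) := by
          have hh2 : MM N s t ((0:Fin N),(1:ℤ)) = x.1 ((0:Fin N),(1:ℤ)) + x.2 ((0:Fin N),(1:ℤ)) := by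
            rw [← hmem, Finsupp.add_apply]
          rw [hh2, h1, hp1, Finsupp.single_eq_same]
          exact Nat.le_add_right 1 _
        rw [MM_apply] at hh
        simp at hh
        omega
    · by_cases ht : 1 ≤ t
      · rw [if_pos ht]
        rw [Finset.sum_eq_single (p0, MM N s (t-1))]
        · rw [if_pos rfl]
          have hcoe : MvPowerSeries.coeff (R := AddMonoidAlgebra ℂ ℤ) p0 (facF (0:Fin N) n)
              = sgl 0 ((Complex.I * (0:ℂ))^n) := by
            rw [hp0, facF_coeff_single, sgl]
            norm_num
          rw [hcoe]
          by_cases hn : n = 0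
          · subst hn
            rw [if_pos rfl]
            have hone : sgl 0 ((Complex.I * (0:ℂ))^0) = 1 := by
              rw [pow_zero]
              exact sgl_zero_one
            rw [hone, one_mul]
          · rw [if_neg hn]
            rw [mul_zero, zero_pow hn]
            have hz : sgl 0 0 = 0 := by
              rw [sgl, AddMonoidAlgebra.single_zero]
            rw [hz, zero_mul]
        · intro b hb hbne
          by_cases h0 : b.1 = p0
          · exfalso
            apply hbne
            have hmem := Finset.HasAntidiagonal.mem_antidiagonal.mp hb
            have hcan : p0 + b.2 = p0 + MM N s (t-1) := by
              rw [← MM_succ_right s ht, ← hmem, h0]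
            exact Prod.ext h0 (add_left_cancel hcan)
          · rw [if_neg h0]
        · intro habs
          exact absurd (Finset.HasAntidiagonal.mem_antidiagonal.mpr (MM_succ_right s ht).symm) habs
      · rw [if_neg ht]
        apply Finset.sum_eq_zero
        intro x hx
        rw [if_neg]
        intro h0
        have hmem := Finset.HasAntidiagonal.mem_antidiagonal.mp hx
        have hh : (1:ℕ) ≤ MM N s t ((0:Fin N), (0:ℤ)) := by
          have hh2 : MM N s t ((0:Fin N),(0:ℤ)) = x.1 ((0:Fin N),(0:ℤ)) + x.2 ((0:Fin N),(0:ℤ)) := by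
            rw [← hmem, Finsupp.add_apply]
          rw [hh2, h0, hp0, Finsupp.single_eq_same]
          exact Nat.le_add_right 1 _
        rw [MM_apply] at hh
        simp at hh
        omega
  · rw [if_neg hγ]
    apply Finset.sum_eq_zero
    intro x hx
    by_cases hc : MvPowerSeries.coeff (R := AddMonoidAlgebra ℂ ℤ) x.1 (facF γ n) = 0
    · rw [hc, zero_mul]
    · exact absurd (key x hx hc).1 hγ

end Aux2
section Aux3
open DP Complex

def icount {N : ℕ} : DVar N → ℕ
  | Sum.inl _ => 1
  | Sum.inr _ => 0

noncomputable def cfun {N : ℕ} [NeZero N] : DVar N → ℂ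
  | Sum.inl (γ, n) => if γ = 0 then Complex.I ^ n - (if n = 0 then 1 else 0) else 0
  | Sum.inr _ => 1

variable {N : ℕ} [NeZero N]

lemma deg_of_coeff_ne (S : Multiset (DVar N)) : ∀ s t : ℕ,
    MvPowerSeries.coeff (R := AddMonoidAlgebra ℂ ℤ) (MM N s t) ((S.map facDV).prod) ≠ 0 →
    (S.map icount).sum = s + t := by
  induction S using Multiset.induction_on with
  | empty =>
    intro s t h
    rw [Multiset.map_zero, Multiset.prod_zero, MvPowerSeries.coeff_one] at h
    split_ifs at h with hz
    · obtain ⟨rfl, rfl⟩ := (MM_eq_zero_iff s t).mp hz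
      simp
    · exact absurd rfl h
  | cons v S ih =>
    intro s t h
    rw [Multiset.map_cons, Multiset.prod_cons] at h
    obtain ⟨γ, n⟩ | u := v
    · rw [show facDV (Sum.inl (γ, n) : DVar N) = facF γ n from rfl] at h
      rw [coeff_facF_mul] at h
      by_cases hγ : γ = 0
      · rw [if_pos hγ] at h
        have hor : (1 ≤ s ∧ MvPowerSeries.coeff (R := AddMonoidAlgebra ℂ ℤ) (MM N (s-1) t)
              ((S.map facDV).prod) ≠ 0)
            ∨ (1 ≤ t ∧ MvPowerSeries.coeff (R := AddMonoidAlgebra ℂ ℤ) (MM N s (t-1))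
              ((S.map facDV).prod) ≠ 0) := by
          by_contra hcon
          push_neg at hcon
          obtain ⟨h1, h2⟩ := hcon
          apply h
          split_ifs with hs ht hn <;> simp_all
        rw [Multiset.map_cons, Multiset.sum_cons]
        have hic : icount (Sum.inl (γ, n) : DVar N) = 1 := rfl
        rw [hic]
        rcases hor with ⟨hs, hC⟩ | ⟨ht, hC⟩
        · have := ih (s-1) t hC
          omega
        · have := ih s (t-1) hC
          omega
      · rw [if_neg hγ] at h
        exact absurd rfl h
    · rw [show facDV (Sum.inr u : DVar N) = 1 from rfl, one_mul] at h
      rw [Multiset.map_cons, Multiset.sum_cons]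
      have hic : icount (Sum.inr u : DVar N) = 0 := rfl
      rw [hic, zero_add]
      exact ih s t h

/-- The alternating sum of `TT`-values of coefficients along the antidiagonal. -/
noncomputable def AA (S : Multiset (DVar N)) (e : ℕ) : ℂ :=
  ∑ r ∈ Finset.range (e+1), (-1:ℂ)^(e-r) *
    TT (MvPowerSeries.coeff (R := AddMonoidAlgebra ℂ ℤ) (MM N r (e-r)) ((S.map facDV).prod))

lemma AA_eq (S : Multiset (DVar N)) : ∀ e : ℕ,
    AA S e = (if (S.map icount).sum = e then (1:ℂ) else 0) * ((S.map cfun).prod) := by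
  induction S using Multiset.induction_on with
  | empty =>
    intro e
    cases e with
    | zero =>
      rw [AA, Finset.sum_range_one]
      simp [MM_eq_zero_iff, MvPowerSeries.coeff_one]
    | succ e' =>
      rw [AA]
      have hz : ∀ r ∈ Finset.range (e'+1+1), (-1:ℂ)^(e'+1-r) *
          TT (MvPowerSeries.coeff (R := AddMonoidAlgebra ℂ ℤ) (MM N r (e'+1-r))
            (((0 : Multiset (DVar N)).map facDV).prod)) = 0 := by
        intro r hr
        rw [Multiset.map_zero, Multiset.prod_zero, MvPowerSeries.coeff_one]
        rw [if_neg]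
        · rw [map_zero, mul_zero]
        · rw [MM_eq_zero_iff]
          rintro ⟨rfl, h2⟩
          omega
      rw [Finset.sum_eq_zero hz]
      simp
  | cons v S ih =>
    intro e
    obtain ⟨γ, n⟩ | u := v
    · by_cases hγ : γ = 0
      · subst hγ
        cases e with
        | zero =>
          rw [AA, Finset.sum_range_one]
          rw [Multiset.map_cons, Multiset.prod_cons,
            show facDV (Sum.inl ((0:Fin N), n) : DVar N) = facF (0:Fin N) n from rfl,
            coeff_facF_mul, if_pos rfl]
          rw [if_neg (by omega : ¬ (1:ℕ) ≤ 0), if_neg (by omega : ¬ (1:ℕ) ≤ 0 - 0), add_zero,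
            map_zero, mul_zero]
          rw [Multiset.map_cons, Multiset.sum_cons]
          have hic : icount (Sum.inl ((0:Fin N), n) : DVar N) = 1 := rfl
          rw [hic, if_neg (by omega), zero_mul]
        | succ e' =>
          have hfac : (Multiset.map facDV ((Sum.inl ((0:Fin N), n) : DVar N) ::ₘ S)).prod
              = facF (0:Fin N) n * (Multiset.map facDV S).prod := by
            rw [Multiset.map_cons, Multiset.prod_cons]
            rfl
          have hterm : ∀ r ∈ Finset.range (e'+1+1),
              (-1:ℂ)^(e'+1-r) * TT (MvPowerSeries.coeff (R := AddMonoidAlgebra ℂ ℤ) (MM N r (e'+1-r))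
                ((Multiset.map facDV ((Sum.inl ((0:Fin N), n) : DVar N) ::ₘ S)).prod))
              = (-1:ℂ)^(e'+1-r) *
                ((if 1 ≤ r then Complex.I^n * TT (MvPowerSeries.coeff (R := AddMonoidAlgebra ℂ ℤ)
                    (MM N (r-1) (e'+1-r)) ((Multiset.map facDV S).prod)) else 0)
                + (if 1 ≤ e'+1-r then (if n = 0 then TT (MvPowerSeries.coeff (R := AddMonoidAlgebra ℂ ℤ)
                    (MM N r (e'+1-r-1)) ((Multiset.map facDV S).prod)) else 0) else 0)) := by
            intro r _
            rw [hfac, coeff_facF_mul, if_pos rfl, map_add]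
            congr 1
            congr 1
            · split_ifs with hs
              · rw [map_mul, TT_sgl]
              · exact map_zero TT
            · split_ifs with ht hn
              · rfl
              · exact map_zero TT
              · exact map_zero TT
          rw [AA, Finset.sum_congr rfl hterm]
          simp only [mul_add]
          rw [Finset.sum_add_distrib]
          have hA : ∑ r ∈ Finset.range (e'+1+1), (-1:ℂ)^(e'+1-r) *
              (if 1 ≤ r then Complex.I^n * TT (MvPowerSeries.coeff (R := AddMonoidAlgebra ℂ ℤ)
                (MM N (r-1) (e'+1-r)) ((Multiset.map facDV S).prod)) else 0)
              = Complex.I^n * AA S e' := by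
            rw [Finset.sum_range_succ']
            rw [if_neg (by omega : ¬ (1:ℕ) ≤ 0), mul_zero, add_zero]
            rw [AA, Finset.mul_sum]
            apply Finset.sum_congr rfl
            intro i hi
            rw [if_pos (by omega : 1 ≤ i + 1)]
            have h1 : e'+1-(i+1) = e'-i := by omega
            have h2 : i + 1 - 1 = i := by omega
            rw [h1, h2]
            ring
          have hB : ∑ r ∈ Finset.range (e'+1+1), (-1:ℂ)^(e'+1-r) *
              (if 1 ≤ e'+1-r then (if n = 0 then TT (MvPowerSeries.coeff (R := AddMonoidAlgebra ℂ ℤ)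
                (MM N r (e'+1-r-1)) ((Multiset.map facDV S).prod)) else 0) else 0)
              = (if n = 0 then (1:ℂ) else 0) * (-(AA S e')) := by
            rw [Finset.sum_range_succ]
            rw [if_neg (by omega : ¬ (1:ℕ) ≤ e' + 1 - (e' + 1)), mul_zero, add_zero]
            by_cases hn : n = 0
            · simp only [if_pos hn]
              rw [one_mul, AA, ← Finset.sum_neg_distrib]
              apply Finset.sum_congr rfl
              intro r hr
              rw [if_pos (by rw [Finset.mem_range] at hr; omega : 1 ≤ e'+1-r)]
              have h1 : e'+1-r-1 = e'-r := by omega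
              have h2 : e'+1-r = (e'-r)+1 := by rw [Finset.mem_range] at hr; omega
              rw [h1, h2, pow_succ]
              ring
            · simp only [if_neg hn]
              simp
          rw [hA, hB]
          rw [Multiset.map_cons, Multiset.sum_cons, Multiset.map_cons, Multiset.prod_cons]
          rw [ih e']
          have hic : icount (Sum.inl ((0:Fin N), n) : DVar N) = 1 := rfl
          have hcf : cfun (Sum.inl ((0:Fin N), n) : DVar N)
              = Complex.I^n - (if n = 0 then 1 else 0) := by
            simp [cfun]
          rw [hic, hcf]
          have hif : (if 1 + (Multiset.map icount S).sum = e' + 1 then (1:ℂ) else 0)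
              = (if (Multiset.map icount S).sum = e' then (1:ℂ) else 0) := by
            rcases eq_or_ne ((Multiset.map icount S).sum) e' with hq | hq
            · rw [if_pos hq, if_pos (by omega)]
            · rw [if_neg hq, if_neg (by omega)]
          rw [hif]
          ring
      · rw [AA]
        have hz : ∀ r ∈ Finset.range (e+1), (-1:ℂ)^(e-r) *
            TT (MvPowerSeries.coeff (R := AddMonoidAlgebra ℂ ℤ) (MM N r (e-r))
              ((Multiset.map facDV ((Sum.inl (γ, n) : DVar N) ::ₘ S)).prod)) = 0 := by
          intro r _
          rw [Multiset.map_cons, Multiset.prod_cons,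
            show facDV (Sum.inl (γ, n) : DVar N) = facF γ n from rfl,
            coeff_facF_mul, if_neg hγ, map_zero, mul_zero]
        rw [Finset.sum_eq_zero hz]
        simp only [Multiset.map_cons, Multiset.sum_cons, Multiset.prod_cons]
        have hcf : cfun (Sum.inl (γ, n) : DVar N) = 0 := by
          simp [cfun, hγ]
        rw [hcf, zero_mul, mul_zero]
    · have hAA : AA ((Sum.inr u : DVar N) ::ₘ S) e = AA S e := by
        rw [AA, AA]
        apply Finset.sum_congr rfl
        intro r _
        rw [Multiset.map_cons, Multiset.prod_cons,
          show facDV (Sum.inr u : DVar N) = 1 from rfl, one_mul]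
      rw [hAA, ih e]
      rw [Multiset.map_cons, Multiset.sum_cons, Multiset.map_cons, Multiset.prod_cons]
      have hic : icount (Sum.inr u : DVar N) = 0 := rfl
      have hcf : cfun (Sum.inr u : DVar N) = 1 := rfl
      rw [hic, hcf, zero_add, one_mul]

end Aux3
section Aux4
open DP Complex

def wfun {N : ℕ} : DVar N → ℤ
  | Sum.inl (_, i) => (i : ℤ)
  | Sum.inr _ => -1

variable {N : ℕ} [NeZero N]

omit [NeZero N] in
lemma wdeg_eq (m : DVar N →₀ ℕ) : wdeg m = ∑ v ∈ m.support, wfun v * (m v : ℤ) := by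
  rw [wdeg]
  apply Finset.sum_congr rfl
  intro v _
  obtain ⟨γ, i⟩ | u := v <;> rfl

omit [NeZero N] in
lemma toMultiset_map_prod {M : Type*} [CommMonoid M] (m : DVar N →₀ ℕ) (g : DVar N → M) :
    ((Finsupp.toMultiset m).map g).prod = m.prod fun v k => g v ^ k := by
  induction m using Finsupp.induction with
  | zero => simp
  | single_add a b f ha hb ih =>
    rw [Finsupp.toMultiset_add, Multiset.map_add, Multiset.prod_add, ih,
      Finsupp.toMultiset_single, Multiset.nsmul_singleton, Multiset.map_replicate,
      Multiset.prod_replicate,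
      Finsupp.prod_add_index' (fun x => pow_zero (g x)) (fun x b1 b2 => pow_add (g x) b1 b2)]
    have hs : (Finsupp.single a b).prod (fun v k => g v ^ k) = g a ^ b :=
      Finsupp.prod_single_index (pow_zero _)
    simp only [hs]

omit [NeZero N] in
lemma toMultiset_map_sum (m : DVar N →₀ ℕ) (g : DVar N → ℕ) :
    ((Finsupp.toMultiset m).map g).sum = m.sum fun v k => k * g v := by
  induction m using Finsupp.induction with
  | zero => simp
  | single_add a b f ha hb ih =>
    rw [Finsupp.toMultiset_add, Multiset.map_add, Multiset.sum_add, ih,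
      Finsupp.toMultiset_single, Multiset.nsmul_singleton, Multiset.map_replicate,
      Multiset.sum_replicate, smul_eq_mul,
      Finsupp.sum_add_index' (fun x => zero_mul (g x)) (fun x b1 b2 => add_mul b1 b2 (g x))]
    have hs : (Finsupp.single a b).sum (fun v k => k * g v) = b * g a :=
      Finsupp.sum_single_index (zero_mul (g a))
    simp only [hs]

noncomputable def BB (N d : ℕ) [NeZero N] : DVar N →₀ ℕ :=
  ∑ γ : Fin N, ∑ n ∈ Finset.range (d+1), Finsupp.single (Sum.inl (γ, n)) d

lemma le_BB (d : ℕ) (γ : Fin N) (n : ℕ) (hn : n ≤ d) : d ≤ BB N d (Sum.inl (γ, n)) := by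
  have h1 : Finsupp.single (Sum.inl (γ, n) : DVar N) d ≤ BB N d := by
    rw [BB]
    calc Finsupp.single (Sum.inl (γ, n) : DVar N) d
        ≤ ∑ n' ∈ Finset.range (d+1), Finsupp.single (Sum.inl (γ, n') : DVar N) d :=
          Finset.single_le_sum (f := fun n' => Finsupp.single (Sum.inl (γ, n') : DVar N) d)
            (fun i _ => zero_le) (Finset.mem_range.mpr (by omega))
      _ ≤ ∑ γ' : Fin N, ∑ n' ∈ Finset.range (d+1), Finsupp.single (Sum.inl (γ', n') : DVar N) d :=
          Finset.single_le_sum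
            (f := fun γ' => ∑ n' ∈ Finset.range (d+1), Finsupp.single (Sum.inl (γ', n') : DVar N) d)
            (fun i _ => zero_le) (Finset.mem_univ γ)
  have h2 := Finsupp.le_def.mp h1 (Sum.inl (γ, n))
  rwa [Finsupp.single_eq_same] at h2

lemma m_le_BB (d : ℕ) (f : DP N) (hhom : IsHomog (d:ℤ) f)
    (heps : ∀ m, co f m ≠ 0 → m (Sum.inr ()) = 0)
    (r t : ℕ) (hrt : r + t = d) (m : DVar N →₀ ℕ) (h1 : co f m ≠ 0)
    (h2 : MvPowerSeries.coeff (R := AddMonoidAlgebra ℂ ℤ) (MM N r t)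
      (m.prod fun v k => facDV v ^ k) ≠ 0) :
    m ≤ BB N d := by
  have hinr : m (Sum.inr ()) = 0 := heps m h1
  have hw : wdeg m = (d:ℤ) := hhom m h1
  have h3 := deg_of_coeff_ne m.toMultiset r t (by rw [toMultiset_map_prod]; exact h2)
  rw [toMultiset_map_sum] at h3
  have hdeg : (m.sum fun v k => k * icount v) = d := by omega
  rw [Finsupp.le_def]
  intro v
  obtain ⟨γ, n⟩ | u := v
  · by_cases hn : n ≤ d
    · refine le_trans ?_ (le_BB d γ n hn)
      by_cases hv : (Sum.inl (γ, n) : DVar N) ∈ m.support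
      · have hle : m (Sum.inl (γ, n)) * icount (Sum.inl (γ, n) : DVar N)
            ≤ m.sum fun v k => k * icount v :=
          Finset.single_le_sum (f := fun v => m v * icount v) (fun i _ => Nat.zero_le _) hv
        have hic : icount (Sum.inl (γ, n) : DVar N) = 1 := rfl
        rw [hic, mul_one] at hle
        omega
      · rw [Finsupp.notMem_support_iff.mp hv]
        exact Nat.zero_le d
    · have hz : m (Sum.inl (γ, n)) = 0 := by
        by_contra hmv
        have hv : (Sum.inl (γ, n) : DVar N) ∈ m.support := Finsupp.mem_support_iff.mpr hmv
        have hnonneg : ∀ v ∈ m.support, (0:ℤ) ≤ wfun v * (m v : ℤ) := by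
          intro v hv'
          obtain ⟨γ', i⟩ | u' := v
          · have : wfun (Sum.inl (γ', i) : DVar N) = (i:ℤ) := rfl
            rw [this]
            positivity
          · cases u'
            exact absurd hinr (Finsupp.mem_support_iff.mp hv')
        have hterm : wfun (Sum.inl (γ, n) : DVar N) * (m (Sum.inl (γ, n)) : ℤ) ≤ wdeg m := by
          rw [wdeg_eq]
          exact Finset.single_le_sum (f := fun v => wfun v * (m v : ℤ)) hnonneg hv
        have hwv : wfun (Sum.inl (γ, n) : DVar N) = (n:ℤ) := rfl
        rw [hwv, hw] at hterm
        have hm1 : 1 ≤ m (Sum.inl (γ, n)) := Nat.one_le_iff_ne_zero.mpr hmv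
        have : (n:ℤ) * 1 ≤ (n:ℤ) * (m (Sum.inl (γ, n)) : ℤ) := by
          apply mul_le_mul_of_nonneg_left _ (by positivity)
          exact_mod_cast hm1
        omega
      rw [hz]
      exact Nat.zero_le _
  · cases u
    rw [hinr]
    exact Nat.zero_le _

end Aux4
section Aux5
open DP Complex

variable {N : ℕ} [NeZero N]

lemma A_final (d : ℕ) (f : DP N) (hhom : IsHomog (d:ℤ) f)
    (heps : ∀ m, co f m ≠ 0 → m (Sum.inr ()) = 0) (m : DVar N →₀ ℕ) (h1 : co f m ≠ 0) :
    AA m.toMultiset d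
      = if m = Finsupp.single (Sum.inl ((0:Fin N),1)) d then Complex.I^d else 0 := by
  rw [AA_eq, toMultiset_map_sum, toMultiset_map_prod]
  have hinr := heps m h1
  have hw := hhom m h1
  by_cases hm : m = Finsupp.single (Sum.inl ((0:Fin N),1)) d
  · rw [if_pos hm, hm]
    have hsum : (Finsupp.single (Sum.inl ((0:Fin N),1) : DVar N) d).sum
        (fun v k => k * icount v) = d := by
      have hs : (Finsupp.single (Sum.inl ((0:Fin N),1) : DVar N) d).sum
          (fun v k => k * icount v) = d * icount (Sum.inl ((0:Fin N),1) : DVar N) :=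
        Finsupp.sum_single_index (zero_mul _)
      have hic : icount (Sum.inl ((0:Fin N),1) : DVar N) = 1 := rfl
      rw [hs, hic, mul_one]
    have hprod : (Finsupp.single (Sum.inl ((0:Fin N),1) : DVar N) d).prod
        (fun v k => cfun v ^ k) = cfun (Sum.inl ((0:Fin N),1) : DVar N) ^ d :=
      Finsupp.prod_single_index (pow_zero _)
    rw [hsum, hprod, if_pos rfl, one_mul]
    have hcf : cfun (Sum.inl ((0:Fin N),1) : DVar N) = Complex.I := by
      simp [cfun]
    rw [hcf]
  · rw [if_neg hm]
    by_cases hc : ∃ v ∈ m.support, cfun v = 0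
    · obtain ⟨v, hv, hcv⟩ := hc
      have hp : (m.prod fun v k => cfun v ^ k) = 0 := by
        apply Finset.prod_eq_zero hv
        show cfun v ^ m v = 0
        rw [hcv, zero_pow (Finsupp.mem_support_iff.mp hv)]
      rw [hp, mul_zero]
    · push_neg at hc
      have hshape : ∀ v ∈ m.support, ∃ n : ℕ, 1 ≤ n ∧ v = Sum.inl ((0:Fin N), n) := by
        intro v hv
        obtain ⟨γ, n⟩ | u' := v
        · have hcv := hc _ hv
          have hγ : γ = 0 := by
            by_contra hγ
            exact hcv (by simp [cfun, hγ])
          subst hγ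
          refine ⟨n, ?_, rfl⟩
          by_contra hn
          have hn0 : n = 0 := by omega
          subst hn0
          exact hcv (by simp [cfun])
        · cases u'
          exact absurd hinr (Finsupp.mem_support_iff.mp hv)
      rw [if_neg, zero_mul]
      intro hsum
      apply hm
      have hsum' : (m.sum fun v k => (k:ℕ)) = d := by
        rw [Finsupp.sum] at hsum ⊢
        rw [← hsum]
        apply Finset.sum_congr rfl
        intro v hv
        obtain ⟨n, hn1, rfl⟩ := hshape v hv
        have : icount (Sum.inl ((0:Fin N), n) : DVar N) = 1 := rfl
        rw [this, mul_one]
      have hw' : ∑ v ∈ m.support, wfun v * (m v : ℤ) = (d:ℤ) := by rw [← wdeg_eq, hw]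
      have hzero : ∑ v ∈ m.support, (wfun v - 1) * (m v:ℤ) = 0 := by
        have hsplit : ∑ v ∈ m.support, (wfun v - 1) * (m v:ℤ)
            = (∑ v ∈ m.support, wfun v * (m v:ℤ)) - ∑ v ∈ m.support, (m v:ℤ) := by
          rw [← Finset.sum_sub_distrib]
          apply Finset.sum_congr rfl
          intro v _
          ring
        have hcast : ∑ v ∈ m.support, (m v:ℤ) = (d:ℤ) := by
          have := hsum'
          rw [Finsupp.sum] at this
          exact_mod_cast congrArg (Nat.cast : ℕ → ℤ) this
        rw [hsplit, hw', hcast, sub_self]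
      have hnn : ∀ v ∈ m.support, 0 ≤ (wfun v - 1) * (m v:ℤ) := by
        intro v hv
        obtain ⟨n, hn1, rfl⟩ := hshape v hv
        have hwv : wfun (Sum.inl ((0:Fin N), n) : DVar N) = (n:ℤ) := rfl
        rw [hwv]
        have h1n : (1:ℤ) ≤ (n:ℤ) := by exact_mod_cast hn1
        exact mul_nonneg (by omega) (Int.natCast_nonneg _)
      have hall := (Finset.sum_eq_zero_iff_of_nonneg hnn).mp hzero
      have hsupp : m.support ⊆ {Sum.inl ((0:Fin N),1)} := by
        intro v hv
        obtain ⟨n, hn1, rfl⟩ := hshape v hv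
        have h0 := hall _ hv
        have hmv : (m (Sum.inl ((0:Fin N), n)) : ℤ) ≠ 0 := by
          exact_mod_cast Finsupp.mem_support_iff.mp hv
        have hwv : wfun (Sum.inl ((0:Fin N), n) : DVar N) = (n:ℤ) := rfl
        rw [hwv] at h0
        rcases mul_eq_zero.mp h0 with h | h
        · have hn : n = 1 := by omega
          rw [hn]
          exact Finset.mem_singleton_self _
        · exact absurd h hmv
      have hm' := Finsupp.support_subset_singleton.mp hsupp
      rw [hm'] at hsum' ⊢
      have : (Finsupp.single (Sum.inl ((0:Fin N),1) : DVar N)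
          (m (Sum.inl ((0:Fin N),1)))).sum (fun v k => (k:ℕ))
          = m (Sum.inl ((0:Fin N),1)) := Finsupp.sum_single_index rfl
      rw [this] at hsum'
      rw [hsum']

lemma evalAt11_eq (d : ℕ) (f : DP N) (hhom : IsHomog (d:ℤ) f) :
    evalAt11 f = co f (Finsupp.single (Sum.inl ((0:Fin N),1)) d) := by
  rw [evalAt11]
  apply finsum_eq_single
  intro k hk
  by_contra hco
  have hw := hhom _ hco
  have hwd : wdeg (Finsupp.single (Sum.inl ((0:Fin N),1) : DVar N) k) = (k:ℤ) := by
    by_cases hk0 : k = 0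
    · subst hk0
      rw [Finsupp.single_zero]
      simp [wdeg]
    · rw [wdeg_eq, Finsupp.support_single_ne_zero _ hk0, Finset.sum_singleton,
        Finsupp.single_eq_same]
      have : wfun (Sum.inl ((0:Fin N),1) : DVar N) = 1 := rfl
      rw [this, one_mul]
  rw [hwd] at hw
  exact hk (by exact_mod_cast hw)

end Aux5
section Aux6
open DP Complex

lemma ones_apply (d : ℕ) (j' : Fin d) : (∑ j : Fin d, Finsupp.single j (1:ℕ)) j' = 1 := by
  rw [Finset.sum_apply']
  simp [Finsupp.single_apply]

lemma coeff_ones_eq (d : ℕ) (R : MvPolynomial (Fin d) ℂ) (hR : R.totalDegree ≤ d) :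
    MvPolynomial.coeff (∑ j : Fin d, Finsupp.single j 1) R
      = ∑ S ∈ (Finset.univ : Finset (Fin d)).powerset,
          (-1:ℂ)^(d - S.card) * MvPolynomial.eval (fun j => if j ∈ S then (1:ℂ) else 0) R := by
  classical
  rw [MvPolynomial.as_sum R]
  simp only [MvPolynomial.coeff_sum, map_sum, Finset.mul_sum]
  rw [Finset.sum_comm]
  apply Finset.sum_congr rfl
  intro α hα
  have hαd : (α.sum fun _ e => e) ≤ d := le_trans (MvPolynomial.le_totalDegree hα) hR
  rw [MvPolynomial.coeff_monomial]
  have hprodext : ∀ (x : Fin d → ℂ), (α.prod fun j e => x j ^ e) = ∏ j : Fin d, x j ^ α j := by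
    intro x
    rw [Finsupp.prod]
    apply Finset.prod_subset (Finset.subset_univ _)
    intro j _ hj
    rw [Finsupp.notMem_support_iff.mp hj, pow_zero]
  have hstep : ∀ S ∈ (Finset.univ : Finset (Fin d)).powerset,
      (-1:ℂ)^(d - S.card) * MvPolynomial.eval (fun j => if j ∈ S then (1:ℂ) else 0)
        ((MvPolynomial.monomial α) (MvPolynomial.coeff α R))
      = ((∏ j ∈ S, (1:ℂ)) * ∏ j ∈ Finset.univ \ S, (-((0:ℂ)^(α j))))
          * MvPolynomial.coeff α R := by
    intro S _
    rw [MvPolynomial.eval_monomial, hprodext]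
    have h1 : ∏ j : Fin d, (if j ∈ S then (1:ℂ) else 0)^(α j)
        = (∏ j ∈ S, (1:ℂ)) * ∏ j ∈ Finset.univ \ S, (0:ℂ)^(α j) := by
      have hc : ∀ j : Fin d, (if j ∈ S then (1:ℂ) else 0)^(α j)
          = (if j ∈ S then (1:ℂ) else (0:ℂ)^(α j)) := by
        intro j
        split_ifs with h
        · exact one_pow _
        · rfl
      rw [Finset.prod_congr rfl (fun j _ => hc j), Finset.prod_ite]
      rw [Finset.filter_mem_eq_inter, Finset.univ_inter, Finset.filter_not,
        Finset.filter_mem_eq_inter, Finset.univ_inter]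
    have h2 : ((-1:ℂ))^(d - S.card) = ∏ j ∈ Finset.univ \ S, (-1:ℂ) := by
      rw [Finset.prod_const]
      congr 1
      rw [Finset.card_sdiff_of_subset (Finset.subset_univ S), Finset.card_univ, Fintype.card_fin]
    have h4 : ∏ j ∈ Finset.univ \ S, (-((0:ℂ)^(α j)))
        = (∏ j ∈ Finset.univ \ S, (-1:ℂ)) * ∏ j ∈ Finset.univ \ S, (0:ℂ)^(α j) := by
      rw [← Finset.prod_mul_distrib]
      apply Finset.prod_congr rfl
      intro j _
      ring
    rw [h1, h2, h4]
    ring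
  rw [Finset.sum_congr rfl hstep, ← Finset.sum_mul, ← Finset.prod_add]
  by_cases h0 : ∃ j, α j = 0
  · obtain ⟨j, hj⟩ := h0
    have hz : ∏ j : Fin d, ((1:ℂ) + -((0:ℂ)^(α j))) = 0 := by
      apply Finset.prod_eq_zero (Finset.mem_univ j)
      rw [hj, pow_zero]
      ring
    rw [hz, zero_mul, if_neg]
    intro hcon
    have h5 : α j = 1 := by
      rw [hcon]
      exact ones_apply d j
    omega
  · push_neg at h0
    rw [Finsupp.sum_fintype _ _ (fun _ => rfl)] at hαd
    have hall : ∀ j, α j = 1 := by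
      intro j
      by_contra hj
      have hlt : ∑ j : Fin d, (1:ℕ) < ∑ j : Fin d, α j :=
        Finset.sum_lt_sum (fun i _ => by have := h0 i; omega)
          ⟨j, Finset.mem_univ j, by have := h0 j; omega⟩
      rw [Finset.sum_const, Finset.card_univ, Fintype.card_fin, smul_eq_mul, mul_one] at hlt
      omega
    have hαones : α = ∑ j : Fin d, Finsupp.single j 1 := by
      ext j'
      rw [hall j', ones_apply]
    rw [if_pos hαones]
    have hone : ∏ j : Fin d, ((1:ℂ) + -((0:ℂ)^(α j))) = 1 := by
      apply Finset.prod_eq_one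
      intro j _
      rw [hall j, pow_one]
      ring
    rw [hone, one_mul]

lemma prod_factorial_single {α : Type*} [DecidableEq α] (x y : α) (hxy : x ≠ y) (r t : ℕ) :
    (∏ v ∈ (Finsupp.single x r + Finsupp.single y t).support,
      ((Finsupp.single x r + Finsupp.single y t) v).factorial)
    = r.factorial * t.factorial := by
  rcases eq_or_ne r 0 with rfl | hr
  · rw [Finsupp.single_zero, zero_add, Nat.factorial_zero, one_mul]
    rcases eq_or_ne t 0 with rfl | ht
    · rw [Finsupp.single_zero]
      simp
    · rw [Finsupp.support_single_ne_zero _ ht, Finset.prod_singleton, Finsupp.single_eq_same]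
  · rcases eq_or_ne t 0 with rfl | ht
    · rw [Finsupp.single_zero, add_zero, Nat.factorial_zero, mul_one]
      rw [Finsupp.support_single_ne_zero _ hr, Finset.prod_singleton, Finsupp.single_eq_same]
    · have hdisj : Disjoint (Finsupp.single x r).support (Finsupp.single y t).support := by
        rw [Finsupp.support_single_ne_zero _ hr, Finsupp.support_single_ne_zero _ ht]
        exact Finset.disjoint_singleton.mpr hxy
      rw [Finsupp.support_add_eq hdisj, Finset.prod_union hdisj,
        Finsupp.support_single_ne_zero _ hr, Finsupp.support_single_ne_zero _ ht,
        Finset.prod_singleton, Finset.prod_singleton, Finsupp.add_apply, Finsupp.add_apply,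
        Finsupp.single_eq_same, Finsupp.single_eq_same,
        Finsupp.single_eq_of_ne hxy.symm, Finsupp.single_eq_of_ne hxy,
        add_zero, zero_add]

variable {N : ℕ} [NeZero N]

lemma sum_singles_eq (d : ℕ) (S : Finset (Fin d)) :
    (∑ j : Fin d, Finsupp.single (((0:Fin N), (if j ∈ S then (1:ℤ) else 0))) (1:ℕ))
      = MM N S.card (d - S.card) := by
  have hc : ∀ j : Fin d, Finsupp.single (((0:Fin N), (if j ∈ S then (1:ℤ) else 0))) (1:ℕ)
      = if j ∈ S then Finsupp.single ((0:Fin N),(1:ℤ)) (1:ℕ)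
        else Finsupp.single ((0:Fin N),(0:ℤ)) (1:ℕ) := by
    intro j
    split_ifs <;> rfl
  rw [Finset.sum_congr rfl (fun j _ => hc j), Finset.sum_ite, Finset.sum_const, Finset.sum_const]
  rw [Finset.filter_mem_eq_inter, Finset.univ_inter, Finset.filter_not,
    Finset.filter_mem_eq_inter, Finset.univ_inter]
  rw [Finset.card_sdiff_of_subset (Finset.subset_univ S), Finset.card_univ, Fintype.card_fin]
  rw [MM]
  simp [Finsupp.smul_single]

end Aux6
open DP in
/-- Lemma: evaluation at `u^γ_n = δ^{γ,1}δ_{n,1}` via the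
Fourier coefficients.  Let `f ∈ A_N` be homogeneous of degree `d` and let,
for each `k`, `Q k γ` be the (symmetric, degree-`d`) polynomial coefficients
`P_{α_1,…,α_k}(a_1,…,a_k)` of the Fourier expansion of `f` after the
substitution `u^γ_n = Σ_a (ia)^n p^γ_a e^{iax}`; the expansion identity is
stated monomialwise, with the multiplicity factor `k!/Π_v M(v)!` counting the
ordered tuples realizing a monomial `M` in the `p`-variables.  Then the
evaluation of `f` at `u^γ_n = δ^{γ,1}δ_{n,1}` equals `(−i)^d` times the
coefficient of `a_1a_2⋯a_d` in `P_{1,…,1}(a_1,…,a_d)`. -/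
theorem statement12 (N : ℕ) [NeZero N] (d : ℕ) (f : DP N)
    (hhom : IsHomog (d : ℤ) f)
    (heps : ∀ m, co f m ≠ 0 → m (Sum.inr ()) = 0)
    (hpoly : IsDiffPoly f)
    (Q : (k : ℕ) → (Fin k → Fin N) → MvPolynomial (Fin k) ℂ)
    (hdeg : ∀ (k : ℕ) (γ : Fin k → Fin N), (Q k γ).totalDegree ≤ d)
    (hsymm : ∀ (k : ℕ) (γ : Fin k → Fin N) (σ : Equiv.Perm (Fin k))
      (z : Fin k → ℂ),
      MvPolynomial.eval (z ∘ σ) (Q k (γ ∘ σ)) = MvPolynomial.eval z (Q k γ))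
    (hfourier : ∀ (k : ℕ) (γ : Fin k → Fin N) (a : Fin k → ℤ),
      ((∏ v ∈ (∑ j : Fin k, Finsupp.single (γ j, a j) 1).support,
          ((∑ j : Fin k, Finsupp.single (γ j, a j) 1) v).factorial : ℕ) : ℂ) •
        subF f (∑ j : Fin k, Finsupp.single (γ j, a j) 1)
      = ((k.factorial : ℕ) : ℂ) •
          (AddMonoidAlgebra.single (∑ j : Fin k, a j)
            (MvPolynomial.eval (fun j => ((a j : ℤ) : ℂ)) (Q k γ))
            : AddMonoidAlgebra ℂ ℤ)) :
    evalAt11 f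
      = (-Complex.I) ^ d *
        MvPolynomial.coeff (∑ j : Fin d, Finsupp.single j 1)
          (Q d (fun _ => (0 : Fin N))) := by
  classical
  have hB : ∀ S : Finset (Fin d),
      ((S.card.factorial * (d - S.card).factorial : ℕ) : ℂ) *
        TT (subF f (MM N S.card (d - S.card)))
      = ((d.factorial : ℕ) : ℂ) *
          MvPolynomial.eval (fun j => if j ∈ S then (1:ℂ) else 0)
            (Q d (fun _ => (0:Fin N))) := by
    intro S
    have hfr := hfourier d (fun _ => (0:Fin N)) (fun j => if j ∈ S then (1:ℤ) else 0)
    rw [sum_singles_eq d S] at hfr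
    have hpf : (∏ v ∈ (MM N S.card (d - S.card)).support,
        ((MM N S.card (d - S.card)) v).factorial)
        = S.card.factorial * (d - S.card).factorial := by
      rw [MM]
      exact prod_factorial_single _ _ (by simp) _ _
    rw [hpf] at hfr
    have happ := congrArg TT hfr
    rw [map_smul, map_smul, TT_single, smul_eq_mul, smul_eq_mul] at happ
    have hev : (fun j => (((if j ∈ S then (1:ℤ) else 0) : ℤ) : ℂ))
        = (fun j => if j ∈ S then (1:ℂ) else 0) := by
      funext j
      split_ifs <;> norm_num
    rw [hev] at happ
    exact happ
  have hsub : ∀ r t : ℕ, r + t = d →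
      TT (subF f (MM N r t)) = ∑ m ∈ Finset.Iic (BB N d),
        co f m * TT (MvPowerSeries.coeff (R := AddMonoidAlgebra ℂ ℤ) (MM N r t)
          (∏ v ∈ m.support, facDV v ^ m v)) := by
    intro r t hrt
    have hss : (Function.support fun m : DVar N →₀ ℕ =>
        DP.co f m • MvPowerSeries.coeff (R := AddMonoidAlgebra ℂ ℤ) (MM N r t)
          (∏ v ∈ m.support, facDV v ^ m v)) ⊆ ↑(Finset.Iic (BB N d)) := by
      intro m hm
      rw [Function.mem_support] at hm
      have h1 : co f m ≠ 0 := by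
        intro h
        apply hm
        show DP.co f m • _ = 0
        rw [show DP.co f m = 0 from h, zero_smul]
      have h2 : MvPowerSeries.coeff (R := AddMonoidAlgebra ℂ ℤ) (MM N r t)
          (∏ v ∈ m.support, facDV v ^ m v) ≠ 0 := by
        intro h
        apply hm
        show _ • _ = (0 : AddMonoidAlgebra ℂ ℤ)
        rw [h, smul_zero]
      rw [Finset.coe_Iic, Set.mem_Iic]
      exact m_le_BB d f hhom heps r t hrt m h1 h2
    rw [subF, finsum_eq_sum_of_support_subset _ hss, map_sum]
    apply Finset.sum_congr rfl
    intro m _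
    rw [map_smul, smul_eq_mul]
  have hΦ : ∑ r ∈ Finset.range (d+1), (-1:ℂ)^(d-r) * TT (subF f (MM N r (d-r)))
      = Complex.I^d * co f (Finsupp.single (Sum.inl ((0:Fin N),1)) d) := by
    have hrw : ∀ r ∈ Finset.range (d+1), (-1:ℂ)^(d-r) * TT (subF f (MM N r (d-r)))
        = ∑ m ∈ Finset.Iic (BB N d), (-1:ℂ)^(d-r) *
            (co f m * TT (MvPowerSeries.coeff (R := AddMonoidAlgebra ℂ ℤ) (MM N r (d-r))
              (∏ v ∈ m.support, facDV v ^ m v))) := by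
      intro r hr
      rw [hsub r (d-r) (by rw [Finset.mem_range] at hr; omega), Finset.mul_sum]
    rw [Finset.sum_congr rfl hrw, Finset.sum_comm]
    have hm : ∀ m ∈ Finset.Iic (BB N d),
        ∑ r ∈ Finset.range (d+1), (-1:ℂ)^(d-r) *
            (co f m * TT (MvPowerSeries.coeff (R := AddMonoidAlgebra ℂ ℤ) (MM N r (d-r))
              (∏ v ∈ m.support, facDV v ^ m v)))
        = co f m * AA m.toMultiset d := by
      intro m _
      rw [AA, Finset.mul_sum]
      apply Finset.sum_congr rfl
      intro r _
      rw [toMultiset_map_prod, Finsupp.prod]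
      ring
    rw [Finset.sum_congr rfl hm]
    have hud_mem : Finsupp.single (Sum.inl ((0:Fin N),1) : DVar N) d ∈ Finset.Iic (BB N d) := by
      rw [Finset.mem_Iic, Finsupp.le_def]
      intro v
      rcases eq_or_ne v (Sum.inl ((0:Fin N),1) : DVar N) with rfl | hv
      · rw [Finsupp.single_eq_same]
        rcases Nat.eq_zero_or_pos d with rfl | hd
        · exact Nat.zero_le _
        · exact le_BB d 0 1 (by omega)
      · rw [Finsupp.single_eq_of_ne hv]
        exact Nat.zero_le _
    have hz1 : ∀ m ∈ Finset.Iic (BB N d),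
        m ≠ Finsupp.single (Sum.inl ((0:Fin N),1) : DVar N) d →
        co f m * AA m.toMultiset d = 0 := by
      intro m _ hne
      by_cases h1 : co f m = 0
      · rw [h1, zero_mul]
      · rw [A_final d f hhom heps m h1, if_neg hne, mul_zero]
    rw [Finset.sum_eq_single (Finsupp.single (Sum.inl ((0:Fin N),1) : DVar N) d) hz1
      (fun h => absurd hud_mem h)]
    by_cases h1 : co f (Finsupp.single (Sum.inl ((0:Fin N),1) : DVar N) d) = 0
    · rw [h1, zero_mul, mul_zero]
    · rw [A_final d f hhom heps _ h1, if_pos rfl]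
      ring
  have hC := coeff_ones_eq d (Q d (fun _ => (0:Fin N))) (hdeg d _)
  have hcomb : ((d.factorial : ℕ) : ℂ) *
      MvPolynomial.coeff (∑ j : Fin d, Finsupp.single j 1) (Q d (fun _ => (0:Fin N)))
      = ((d.factorial : ℕ) : ℂ) *
          (Complex.I^d * co f (Finsupp.single (Sum.inl ((0:Fin N),1)) d)) := by
    rw [hC, Finset.mul_sum]
    have hper : ∀ S ∈ (Finset.univ : Finset (Fin d)).powerset,
        ((d.factorial : ℕ) : ℂ) * ((-1:ℂ)^(d - S.card) *
          MvPolynomial.eval (fun j => if j ∈ S then (1:ℂ) else 0) (Q d (fun _ => (0:Fin N))))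
        = (-1:ℂ)^(d - S.card) * (((S.card.factorial * (d - S.card).factorial : ℕ) : ℂ) *
            TT (subF f (MM N S.card (d - S.card)))) := by
      intro S _
      rw [hB S]
      ring
    rw [Finset.sum_congr rfl hper, Finset.sum_powerset, Finset.card_univ, Fintype.card_fin]
    have hinner : ∀ r ∈ Finset.range (d+1),
        ∑ S ∈ Finset.powersetCard r (Finset.univ : Finset (Fin d)),
          (-1:ℂ)^(d - S.card) * (((S.card.factorial * (d - S.card).factorial : ℕ) : ℂ) *
            TT (subF f (MM N S.card (d - S.card))))
        = ((d.factorial : ℕ) : ℂ) * ((-1:ℂ)^(d - r) * TT (subF f (MM N r (d-r)))) := by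
      intro r hrr
      have hcS : ∀ S ∈ Finset.powersetCard r (Finset.univ : Finset (Fin d)),
          (-1:ℂ)^(d - S.card) * (((S.card.factorial * (d - S.card).factorial : ℕ) : ℂ) *
            TT (subF f (MM N S.card (d - S.card))))
          = (-1:ℂ)^(d - r) * (((r.factorial * (d - r).factorial : ℕ) : ℂ) *
            TT (subF f (MM N r (d-r)))) := by
        intro S hS
        rw [(Finset.mem_powersetCard.mp hS).2]
      rw [Finset.sum_congr rfl hcS, Finset.sum_const, Finset.card_powersetCard,
        Finset.card_univ, Fintype.card_fin, nsmul_eq_mul]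
      have hcf : ((d.choose r : ℕ) : ℂ) * ((r.factorial * (d - r).factorial : ℕ) : ℂ)
          = ((d.factorial : ℕ) : ℂ) := by
        rw [← Nat.cast_mul]
        congr 1
        rw [← Nat.choose_mul_factorial_mul_factorial
          (by rw [Finset.mem_range] at hrr; omega : r ≤ d)]
        ring
      linear_combination ((-1:ℂ)^(d - r) * TT (subF f (MM N r (d-r)))) * hcf
    rw [Finset.sum_congr rfl hinner, ← Finset.mul_sum, hΦ]
  have hdfac : ((d.factorial : ℕ) : ℂ) ≠ 0 :=
    Nat.cast_ne_zero.mpr (Nat.factorial_ne_zero d)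
  have hcoeff := mul_left_cancel₀ hdfac hcomb
  rw [evalAt11_eq d f hhom, hcoeff, ← mul_assoc, ← mul_pow]
  have hmi : (-Complex.I) * Complex.I = 1 := by
    rw [neg_mul, Complex.I_mul_I, neg_neg]
  rw [hmi, one_pow, one_mul]
end

section
/- Let η be a symmetric nondegenerate N×N complex matrix and let F ∈ ℂ[[t^*_*,ε]] contain only even powers of ε and satisfy the dilaton equation ∂F/∂t^1_1 = ε ∂F/∂ε + Σ_{n≥0} t^α_n ∂F/∂t^α_n − 2F + ε²c₂ for some constant c₂ ∈ ℂ. Define (w^⊤)^α := η^{αμ}(∂²F/∂t^μ_0∂t^1_0)|_{t^1_0↦t^1_0+x} and (w^⊤)^α_n := ∂_x^n(w^⊤)^α. Then for all α and n ≥ 0, O_dil((w^⊤)^α_n|_{x=0}) = n·(w^⊤)^α_n|_{x=0}, where O_dil := ∂/∂t^1_1 − Σ_{m≥0} t^γ_m ∂/∂t^γ_m − ε ∂/∂ε. -/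
/-!
Formal power series in the variables `x`, `t^α_d` and `ε` (the ring
`ℂ[[x, t^*_*, ε]]`), together with the operations used in the statements.
-/

/-- The variables `t^α_d`, `x` and `ε`. -/
inductive BVar (N : ℕ) : Type
  | t : Fin N → ℕ → BVar N
  | x : BVar N
  | e : BVar N
  deriving DecidableEq

/-- The ring `ℂ[[x, t^*_*, ε]]`. -/
abbrev Big (N : ℕ) : Type := MvPowerSeries (BVar N) ℂ

namespace Big

variable {N : ℕ}

/-- Coefficient of a monomial. -/
noncomputable def co (G : Big N) (μ : BVar N →₀ ℕ) : ℂ := MvPowerSeries.coeff μ G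

/-- Build a power series from its coefficients. -/
def ofCo (F : (BVar N →₀ ℕ) → ℂ) : Big N := F

/-- Partial derivative with respect to one of the variables. -/
noncomputable def pd (v : BVar N) (G : Big N) : Big N :=
  ofCo fun μ => ((μ v : ℂ) + 1) * co G (μ + Finsupp.single v 1)

/-- `Σ_{α,n} t^α_{n+1} ∂G/∂t^α_n`. -/
noncomputable def stringSum (G : Big N) : Big N :=
  ofCo fun μ => ∑ᶠ p : Fin N × ℕ,
    co (MvPowerSeries.X (BVar.t p.1 (p.2 + 1)) * pd (BVar.t p.1 p.2) G) μ

/-- `Σ_{α,n} t^α_n ∂G/∂t^α_n`. -/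
noncomputable def dilatonSum (G : Big N) : Big N :=
  ofCo fun μ => ∑ᶠ p : Fin N × ℕ,
    co (MvPowerSeries.X (BVar.t p.1 p.2) * pd (BVar.t p.1 p.2) G) μ

/-- `ε ∂G/∂ε`. -/
noncomputable def epsDel (G : Big N) : Big N :=
  ofCo fun μ => (μ BVar.e : ℂ) * co G μ

/-- Independence of `x`. -/
def XFree (G : Big N) : Prop := ∀ μ, co G μ ≠ 0 → μ BVar.x = 0

/-- Containing only even powers of `ε`. -/
def EvenEps (G : Big N) : Prop := ∀ μ, co G μ ≠ 0 → Even (μ BVar.e)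

/-- `½ η_{αβ} t^α_0 t^β_0` (with lowered indices given by the inverse matrix). -/
noncomputable def quadEta (η : Matrix (Fin N) (Fin N) ℂ) : Big N :=
  (2 : ℂ)⁻¹ • ∑ α : Fin N, ∑ β : Fin N,
    η⁻¹ α β • (MvPowerSeries.X (BVar.t α 0) * MvPowerSeries.X (BVar.t β 0))

/-- `ε²`. -/
noncomputable def epsSq : Big N := MvPowerSeries.X (BVar.e) ^ 2

/-- The substitution `t^1_0 ↦ t^1_0 + x` in an `x`-free series. -/
noncomputable def shiftX [NeZero N] (G : Big N) : Big N :=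
  ofCo fun μ =>
    (Nat.choose (μ (BVar.t 0 0) + μ BVar.x) (μ BVar.x) : ℂ) *
      co G (μ.erase BVar.x + Finsupp.single (BVar.t 0 0) (μ BVar.x))

/-- The series `(w^⊤)^α = η^{αμ} (∂²F/∂t^μ_0 ∂t^1_0)|_{t^1_0 ↦ t^1_0 + x}`. -/
noncomputable def wt [NeZero N] (η : Matrix (Fin N) (Fin N) ℂ) (F : Big N)
    (α : Fin N) : Big N :=
  ∑ μ : Fin N, η α μ • shiftX (pd (BVar.t μ 0) (pd (BVar.t 0 0) F))

/-- Evaluation at `x = 0` (the result regarded again as an element of the big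
ring, not involving `x`). -/
noncomputable def evalX0 (G : Big N) : Big N :=
  ofCo fun μ => if μ BVar.x = 0 then co G μ else 0

/-- Total descendent degree of a monomial in the `t`-variables:
`t^{α_1}_{d_1} ⋯ t^{α_n}_{d_n} ↦ d_1 + ⋯ + d_n`. -/
noncomputable def tdeg (μ : BVar N →₀ ℕ) : ℕ :=
  ∑ v ∈ μ.support,
    (match v with
      | BVar.t _ d => d * μ v
      | _ => 0)

/-- Iterated partial derivative `∂^n/∂t^{α_1}_{d_1}⋯∂t^{α_n}_{d_n}`. -/
noncomputable def dList (L : List (Fin N × ℕ)) (G : Big N) : Big N :=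
  L.foldr (fun p G => pd (BVar.t p.1 p.2) G) G

/-- The value substituted for the variable `u^α_n` (resp. `ε`): the `n`-th
`x`-derivative of the `α`-th component of the given family (resp. `ε`). -/
noncomputable def fac (W : Fin N → Big N) : DVar N → Big N
  | Sum.inl (α, n) => (pd BVar.x)^[n] (W α)
  | Sum.inr _ => MvPowerSeries.X BVar.e

/-- Substitution of a family of power series (and of its `x`-derivatives) into
a differential polynomial: `f(u; u_x, u_{xx}, …)` evaluated at `u^α = W α`. -/
noncomputable def evalDP (f : DP N) (W : Fin N → Big N) : Big N :=
  ofCo fun μ => ∑ᶠ m : DVar N →₀ ℕ,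
    DP.co f m * co (∏ v ∈ m.support, fac W v ^ m v) μ

end Big




section AuxStatement16
open Big
variable {N : ℕ}

lemma Big.coeff_apply' (G : Big N) (μ : BVar N →₀ ℕ) :
    MvPowerSeries.coeff μ G = G μ := rfl

lemma Big.pd_def (v : BVar N) (G : Big N) (μ : BVar N →₀ ℕ) :
    pd v G μ = ((μ v : ℂ) + 1) * G (μ + Finsupp.single v 1) := rfl

lemma Big.epsDel_def (G : Big N) (μ : BVar N →₀ ℕ) :
    epsDel G μ = (μ BVar.e : ℂ) * G μ := rfl

lemma Big.evalX0_def (G : Big N) (μ : BVar N →₀ ℕ) :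
    evalX0 G μ = if μ BVar.x = 0 then G μ else 0 := rfl

lemma bvart_injective {N : ℕ} : Function.Injective (fun p : Fin N × ℕ => BVar.t p.1 p.2) := by
  rintro ⟨a, b⟩ ⟨c, d⟩ h
  simpa [Prod.ext_iff] using h

/-- ℂ-valued total t-degree of a monomial. -/
noncomputable def tcC (μ : BVar N →₀ ℕ) : ℂ :=
  ∑ᶠ p : Fin N × ℕ, (μ (BVar.t p.1 p.2) : ℂ)

lemma tc_fin (μ : BVar N →₀ ℕ) :
    (Function.support fun p : Fin N × ℕ => (μ (BVar.t p.1 p.2) : ℂ)).Finite := by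
  apply Set.Finite.subset (Set.Finite.preimage bvart_injective.injOn μ.support.finite_toSet)
  intro p hp
  simp only [Function.mem_support, ne_eq, Nat.cast_eq_zero] at hp
  simpa [Finsupp.mem_support_iff] using hp

lemma tcC_add_single (μ : BVar N →₀ ℕ) (γ : Fin N) (d k : ℕ) :
    tcC (μ + Finsupp.single (BVar.t γ d) k) = tcC μ + k := by
  unfold tcC
  have h1 : ∀ p : Fin N × ℕ,
      (((μ + Finsupp.single (BVar.t γ d) k) (BVar.t p.1 p.2) : ℕ) : ℂ)
        = (μ (BVar.t p.1 p.2) : ℂ) + (if p = (γ, d) then (k : ℂ) else 0) := by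
    rintro ⟨a, b⟩
    by_cases hp : (a, b) = (γ, d)
    · rw [if_pos hp]
      obtain ⟨rfl, rfl⟩ := Prod.mk.injEq .. ▸ hp
      simp
    · rw [if_neg hp]
      have : BVar.t γ d ≠ BVar.t a b := by
        intro h
        injection h with h1 h2
        exact hp (by rw [← h1, ← h2])
      simp [Finsupp.single_apply, this]
  rw [finsum_congr h1, finsum_add_distrib (tc_fin μ)
    (Set.Finite.subset (Set.finite_singleton (γ, d)) ?_),
    finsum_eq_single _ (γ, d) (fun x hx => if_neg hx), if_pos rfl]
  intro p hp
  simp only [Function.mem_support] at hp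
  by_contra h
  exact hp (if_neg h)

lemma coeff_X_mul_pd (v : BVar N) (G : Big N) (μ : BVar N →₀ ℕ) :
    Big.co (MvPowerSeries.X v * Big.pd v G) μ = (μ v : ℂ) * G μ := by
  classical
  rw [Big.co, MvPowerSeries.X, MvPowerSeries.coeff_monomial_mul]
  by_cases h : Finsupp.single v 1 ≤ μ
  · rw [if_pos h, one_mul, Big.coeff_apply', Big.pd_def]
    have h1 : 1 ≤ μ v := by
      simpa using (Finsupp.single_le_iff.mp h)
    have h2 : ((μ - Finsupp.single v 1 : (BVar N →₀ ℕ))) v = μ v - 1 := by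
      rw [Finsupp.tsub_apply, Finsupp.single_eq_same]
    have h3 : μ - Finsupp.single v 1 + Finsupp.single v 1 = μ := tsub_add_cancel_of_le h
    rw [h2, h3]
    congr 1
    have : μ v - 1 + 1 = μ v := Nat.succ_pred_eq_of_pos h1
    exact_mod_cast congrArg (Nat.cast (R := ℂ)) this
  · rw [if_neg h]
    have : μ v = 0 := by
      by_contra hv
      exact h (Finsupp.single_le_iff.mpr (by omega))
    rw [this]
    simp

lemma dilatonSum_def (G : Big N) (μ : BVar N →₀ ℕ) :
    dilatonSum G μ = tcC μ * G μ := by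
  have h : dilatonSum G μ = ∑ᶠ p : Fin N × ℕ, (μ (BVar.t p.1 p.2) : ℂ) * G μ :=
    finsum_congr fun p => coeff_X_mul_pd (BVar.t p.1 p.2) G μ
  rw [h, tcC, finsum_mul _ _]

lemma pdx_iter (G : Big N) : ∀ (m : ℕ) (ξ : BVar N →₀ ℕ),
    ((Big.pd BVar.x)^[m] G) ξ
      = (∏ i ∈ Finset.range m, ((ξ BVar.x : ℂ) + i + 1)) * G (ξ + Finsupp.single BVar.x m) := by
  intro m
  induction m with
  | zero => intro ξ; simp
  | succ k ih =>
    intro ξ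
    rw [Function.iterate_succ_apply', Big.pd_def, ih]
    have h1 : ((ξ + Finsupp.single BVar.x 1 : BVar N →₀ ℕ)) BVar.x = ξ BVar.x + 1 := by simp
    have h2 : ξ + Finsupp.single BVar.x 1 + Finsupp.single BVar.x k
        = ξ + Finsupp.single BVar.x (k + 1) := by
      rw [add_assoc, ← Finsupp.single_add, add_comm 1 k]
    have h4 : ∀ i ∈ Finset.range k,
        (((ξ BVar.x + 1 : ℕ) : ℂ) + (i : ℂ) + 1) = ((ξ BVar.x : ℂ) + ((i + 1 : ℕ) : ℂ) + 1) := by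
      intro i _
      push_cast
      ring
    rw [h1, h2, Finset.prod_congr rfl h4, Finset.prod_range_succ']
    push_cast
    ring

lemma erase_add_singleX (n : ℕ) (ξ : BVar N →₀ ℕ) (h : ξ BVar.x = 0) :
    (ξ + Finsupp.single BVar.x n : BVar N →₀ ℕ).erase BVar.x = ξ := by
  ext w
  by_cases hw : w = BVar.x
  · subst hw
    rw [Finsupp.erase_same]
    exact h.symm
  · rw [Finsupp.erase_ne hw]
    simp [Finsupp.single_apply, Ne.symm hw]

end AuxStatement16

open Big in
/-- dilaton equation for the topological series `w^⊤`.  Let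
`η` be symmetric nondegenerate and let `F ∈ ℂ[[t^*_*, ε]]` contain only even
powers of `ε` and satisfy the dilaton equation with constant term `ε²c₂`.
With `(w^⊤)^α_n := ∂_x^n((η^{αμ}∂²F/∂t^μ_0∂t^1_0)|_{t^1_0 ↦ t^1_0+x})`, one
has `O_dil ((w^⊤)^α_n|_{x=0}) = n·(w^⊤)^α_n|_{x=0}` for all `α` and `n ≥ 0`,
where `O_dil = ∂/∂t^1_1 − Σ_{γ,m} t^γ_m ∂/∂t^γ_m − ε∂/∂ε`. -/
theorem statement16 (N : ℕ) [NeZero N] (η : Matrix (Fin N) (Fin N) ℂ)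
    (hsym : η.IsSymm) (hnd : IsUnit η.det)
    (F : Big N) (hxF : XFree F) (hev : EvenEps F)
    (c₂ : ℂ)
    (hdilaton : Big.pd (BVar.t 0 1) F
      = epsDel F + dilatonSum F - (2 : ℂ) • F + c₂ • epsSq) :
    ∀ (α : Fin N) (n : ℕ),
      Big.pd (BVar.t 0 1) (evalX0 ((Big.pd BVar.x)^[n] (wt η F α)))
          - dilatonSum (evalX0 ((Big.pd BVar.x)^[n] (wt η F α)))
          - epsDel (evalX0 ((Big.pd BVar.x)^[n] (wt η F α)))
        = (n : ℂ) • evalX0 ((Big.pd BVar.x)^[n] (wt η F α)) := by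
  intro α n
  classical
  -- coefficient form of the dilaton equation
  have hdil : ∀ ρ : BVar N →₀ ℕ,
      ((ρ (BVar.t 0 1) : ℂ) + 1) * F (ρ + Finsupp.single (BVar.t 0 1) 1)
        = ((ρ BVar.e : ℂ) + tcC ρ - 2) * F ρ
          + c₂ * (if ρ = Finsupp.single BVar.e 2 then 1 else 0) := by
    intro ρ
    have h := congrArg (MvPowerSeries.coeff (R := ℂ) ρ) hdilaton
    rw [map_add, map_sub, map_add, map_smul, map_smul, smul_eq_mul, smul_eq_mul] at h
    have hsq : MvPowerSeries.coeff (R := ℂ) ρ (epsSq : Big N)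
        = if ρ = Finsupp.single BVar.e 2 then 1 else 0 := by
      rw [Big.epsSq, MvPowerSeries.coeff_X_pow]
    rw [hsq] at h
    simp only [Big.coeff_apply'] at h
    rw [Big.pd_def, Big.epsDel_def, dilatonSum_def] at h
    linear_combination h
  -- the key identity for the second derivatives of F
  have keyH : ∀ (β : Fin N) (ν : BVar N →₀ ℕ),
      ((ν (BVar.t 0 1) : ℂ) + 1) *
          Big.pd (BVar.t β 0) (Big.pd (BVar.t 0 0) F)
            (ν + Finsupp.single (BVar.t 0 1) 1)
        = (tcC ν + (ν BVar.e : ℂ)) *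
          Big.pd (BVar.t β 0) (Big.pd (BVar.t 0 0) F) ν := by
    intro β ν
    have hsb : BVar.t (0 : Fin N) 1 ≠ BVar.t β 0 := by simp
    have hsa : BVar.t (0 : Fin N) 1 ≠ BVar.t 0 0 := by simp
    simp only [Big.pd_def]
    have e1 : ((ν + Finsupp.single (BVar.t 0 1) 1 : BVar N →₀ ℕ)) (BVar.t β 0)
        = ν (BVar.t β 0) := by
      simp [Finsupp.single_apply, hsb]
    have e2 : ν + Finsupp.single (BVar.t 0 1) 1 + Finsupp.single (BVar.t β 0) 1
        = ν + Finsupp.single (BVar.t β 0) 1 + Finsupp.single (BVar.t 0 1) 1 := by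
      rw [add_right_comm]
    have e3 : ((ν + Finsupp.single (BVar.t β 0) 1 + Finsupp.single (BVar.t 0 1) 1 :
          BVar N →₀ ℕ)) (BVar.t 0 0)
        = ((ν + Finsupp.single (BVar.t β 0) 1 : BVar N →₀ ℕ)) (BVar.t 0 0) := by
      simp [Finsupp.single_apply, hsa]
    have e4 : ν + Finsupp.single (BVar.t β 0) 1 + Finsupp.single (BVar.t 0 1) 1
          + Finsupp.single (BVar.t 0 0) 1
        = (ν + Finsupp.single (BVar.t β 0) 1 + Finsupp.single (BVar.t 0 0) 1)
          + Finsupp.single (BVar.t 0 1) 1 := by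
      rw [add_right_comm]
    rw [e1, e2, e3, e4]
    have e5 : ((ν + Finsupp.single (BVar.t β 0) 1 + Finsupp.single (BVar.t 0 0) 1 :
          BVar N →₀ ℕ)) (BVar.t 0 1) = ν (BVar.t 0 1) := by
      simp [Finsupp.single_apply, Ne.symm hsb, Ne.symm hsa]
    have e6 : ((ν + Finsupp.single (BVar.t β 0) 1 + Finsupp.single (BVar.t 0 0) 1 :
          BVar N →₀ ℕ)) BVar.e = ν BVar.e := by
      simp [Finsupp.single_apply]
    have e7 : tcC (ν + Finsupp.single (BVar.t β 0) 1 + Finsupp.single (BVar.t 0 0) 1)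
        = tcC ν + 2 := by
      rw [tcC_add_single, tcC_add_single]
      push_cast
      ring
    have e8 : ν + Finsupp.single (BVar.t β 0) 1 + Finsupp.single (BVar.t 0 0) 1
        ≠ Finsupp.single BVar.e 2 := by
      intro hcontra
      have h2 := congrArg (fun f : BVar N →₀ ℕ => f (BVar.t 0 0)) hcontra
      simp only [Finsupp.add_apply, Finsupp.single_eq_same, Finsupp.single_apply] at h2
      rw [if_neg (by simp : ¬(BVar.e = BVar.t (0 : Fin N) 0))] at h2
      split_ifs at h2 <;> omega
    have h := hdil (ν + Finsupp.single (BVar.t β 0) 1 + Finsupp.single (BVar.t 0 0) 1)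
    rw [e5, e6, e7, if_neg e8, mul_zero, add_zero] at h
    linear_combination ((ν (BVar.t β 0) : ℂ) + 1)
      * (((ν + Finsupp.single (BVar.t β 0) 1 : BVar N →₀ ℕ)) (BVar.t 0 0) + 1) * h
  -- the coefficients of `wt`
  have hwt : ∀ ξ : BVar N →₀ ℕ, wt η F α ξ
      = (((ξ (BVar.t 0 0) + ξ BVar.x).choose (ξ BVar.x) : ℕ) : ℂ) *
        ∑ β : Fin N, η α β * Big.pd (BVar.t β 0) (Big.pd (BVar.t 0 0) F)
          (ξ.erase BVar.x + Finsupp.single (BVar.t 0 0) (ξ BVar.x)) := by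
    intro ξ
    have h0 : wt η F α ξ = MvPowerSeries.coeff (R := ℂ) ξ (wt η F α) := rfl
    rw [h0, wt, map_sum, Finset.mul_sum]
    refine Finset.sum_congr rfl fun β _ => ?_
    rw [map_smul, smul_eq_mul]
    have h1 : MvPowerSeries.coeff (R := ℂ) ξ
          (shiftX (Big.pd (BVar.t β 0) (Big.pd (BVar.t 0 0) F)))
        = (((ξ (BVar.t 0 0) + ξ BVar.x).choose (ξ BVar.x) : ℕ) : ℂ) *
          Big.pd (BVar.t β 0) (Big.pd (BVar.t 0 0) F)
            (ξ.erase BVar.x + Finsupp.single (BVar.t 0 0) (ξ BVar.x)) := rfl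
    rw [h1]
    ring
  -- the coefficients of the evaluated series
  have hE0 : ∀ ξ : BVar N →₀ ℕ, ξ BVar.x ≠ 0 →
      evalX0 ((Big.pd BVar.x)^[n] (wt η F α)) ξ = 0 := by
    intro ξ h
    rw [Big.evalX0_def, if_neg h]
  have hE : ∀ ξ : BVar N →₀ ℕ, ξ BVar.x = 0 →
      evalX0 ((Big.pd BVar.x)^[n] (wt η F α)) ξ
        = ((∏ i ∈ Finset.range n, ((i : ℂ) + 1)) * (((ξ (BVar.t 0 0) + n).choose n : ℕ) : ℂ)) *
          ∑ β : Fin N, η α β * Big.pd (BVar.t β 0) (Big.pd (BVar.t 0 0) F)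
            (ξ + Finsupp.single (BVar.t 0 0) n) := by
    intro ξ hx
    rw [Big.evalX0_def, if_pos hx, pdx_iter, hwt]
    have c1 : ((ξ + Finsupp.single BVar.x n : BVar N →₀ ℕ)) BVar.x = n := by simp [hx]
    have c2 : ((ξ + Finsupp.single BVar.x n : BVar N →₀ ℕ)) (BVar.t 0 0) = ξ (BVar.t 0 0) := by
      simp [Finsupp.single_apply]
    rw [c1, c2, erase_add_singleX n ξ hx, hx]
    simp only [Nat.cast_zero, zero_add, mul_assoc]
  -- now compare coefficients
  refine MvPowerSeries.ext fun μ => ?_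
  rw [map_sub, map_sub, map_smul, smul_eq_mul]
  simp only [Big.coeff_apply']
  rw [Big.pd_def, dilatonSum_def, Big.epsDel_def]
  by_cases hx : μ BVar.x = 0
  · have hxs : ((μ + Finsupp.single (BVar.t 0 1) 1 : BVar N →₀ ℕ)) BVar.x = μ BVar.x := by
      simp [Finsupp.single_apply]
    rw [hE _ hx, hE _ (by rw [hxs]; exact hx)]
    have d1 : ((μ + Finsupp.single (BVar.t 0 1) 1 : BVar N →₀ ℕ)) (BVar.t 0 0)
        = μ (BVar.t 0 0) := by
      simp [Finsupp.single_apply]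
    have d2 : μ + Finsupp.single (BVar.t 0 1) 1 + Finsupp.single (BVar.t 0 0) n
        = (μ + Finsupp.single (BVar.t 0 0) n) + Finsupp.single (BVar.t 0 1) 1 := by
      rw [add_right_comm]
    rw [d1, d2]
    have e5 : ((μ + Finsupp.single (BVar.t 0 0) n : BVar N →₀ ℕ)) (BVar.t 0 1)
        = μ (BVar.t 0 1) := by
      simp [Finsupp.single_apply]
    have e6 : ((μ + Finsupp.single (BVar.t 0 0) n : BVar N →₀ ℕ)) BVar.e = μ BVar.e := by
      simp [Finsupp.single_apply]
    have e7 : tcC (μ + Finsupp.single (BVar.t 0 0) n) = tcC μ + n := tcC_add_single μ 0 0 n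
    have hkey : ((μ (BVar.t 0 1) : ℂ) + 1) *
        ∑ β : Fin N, η α β * Big.pd (BVar.t β 0) (Big.pd (BVar.t 0 0) F)
          ((μ + Finsupp.single (BVar.t 0 0) n) + Finsupp.single (BVar.t 0 1) 1)
      = (tcC μ + (n : ℂ) + (μ BVar.e : ℂ)) *
        ∑ β : Fin N, η α β * Big.pd (BVar.t β 0) (Big.pd (BVar.t 0 0) F)
          (μ + Finsupp.single (BVar.t 0 0) n) := by
      rw [Finset.mul_sum, Finset.mul_sum]
      refine Finset.sum_congr rfl fun β _ => ?_
      have h := keyH β (μ + Finsupp.single (BVar.t 0 0) n)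
      rw [e5, e6, e7] at h
      linear_combination η α β * h
    linear_combination ((∏ i ∈ Finset.range n, ((i : ℂ) + 1)) *
      (((μ (BVar.t 0 0) + n).choose n : ℕ) : ℂ)) * hkey
  · have hxs : ((μ + Finsupp.single (BVar.t 0 1) 1 : BVar N →₀ ℕ)) BVar.x = μ BVar.x := by
      simp [Finsupp.single_apply]
    rw [hE0 _ hx, hE0 _ (by rw [hxs]; exact hx)]
    ring
end
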